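/- arXiv:1412.8595 — 7 statements merged into one kernel-verified Lean document; each statement's English description precedes it below -/
import Mathlib

section
/- If f : A^n → B satisfies f = f* ∘ ofo restricted to A^n for some f* : A^♯ → B, then for every two-element subset I of {1,...,n}, the identification minor f_I : A^{n-1} → B equals f* ∘ ofo restricted to A^{n-1}. In particular, all identification minors of f are equal, so f has a unique identification minor. -/
/-- `ofo l` lists the distinct elements of `l` in order of first occurrence. -/
def ofo {A : Type*} [DecidableEq A] (l : List A) : List A :=
  l.reverse.dedup.reverse

/-- The order-of-first-occurrence list of a tuple. -/
def ofoFun {A : Type*} [DecidableEq A] {n : ℕ} (a : Fin n → A) : List A :=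
  ofo (List.ofFn a)

/-- `delta i j hij : [n+1] → [n]` is the map δ_I for I = {i,j}, i < j (0-indexed). -/
def delta {n : ℕ} (i j : Fin (n + 1)) (hij : i < j) : Fin (n + 1) → Fin n := fun t =>
  if h : (t : ℕ) < (j : ℕ) then
    ⟨t, lt_of_lt_of_le h (Nat.lt_succ_iff.mp j.isLt)⟩
  else if h2 : (t : ℕ) = (j : ℕ) then
    ⟨i, lt_of_lt_of_le (Fin.lt_def.mp hij) (Nat.lt_succ_iff.mp j.isLt)⟩
  else ⟨(t : ℕ) - 1, by have := t.isLt; omega⟩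

lemma dedup_middle {A : Type*} [DecidableEq A] (x : A) (u v : List A) (hx : x ∈ v) :
    (u ++ x :: v).dedup = (u ++ v).dedup := by
  induction u with
  | nil => simp [List.dedup_cons_of_mem, hx]
  | cons a u ih =>
      by_cases h : a ∈ (u ++ v)
      · have h' : a ∈ (u ++ x :: v) := by
          rcases List.mem_append.mp h with h|h
          · exact List.mem_append.mpr (Or.inl h)
          · exact List.mem_append.mpr (Or.inr (List.mem_cons_of_mem _ h))
        rw [List.cons_append, List.cons_append, List.dedup_cons_of_mem h',
          List.dedup_cons_of_mem h, ih]
      · have h' : a ∉ (u ++ x :: v) := by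
          intro hc
          rcases List.mem_append.mp hc with hc|hc
          · exact h (List.mem_append.mpr (Or.inl hc))
          · rcases List.mem_cons.mp hc with rfl|hc
            · exact h (List.mem_append.mpr (Or.inr hx))
            · exact h (List.mem_append.mpr (Or.inr hc))
        rw [List.cons_append, List.cons_append, List.dedup_cons_of_notMem h',
          List.dedup_cons_of_notMem h, ih]

lemma ofo_middle {A : Type*} [DecidableEq A] (x : A) (u v : List A) (hx : x ∈ u) :
    ofo (u ++ x :: v) = ofo (u ++ v) := by
  unfold ofo
  rw [List.reverse_append, List.reverse_cons, List.reverse_append]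
  rw [show v.reverse ++ [x] ++ u.reverse = v.reverse ++ x :: u.reverse by simp]
  rw [dedup_middle x _ _ (by simpa using hx)]

lemma ofFn_delta {A : Type*} {n : ℕ} (i j : Fin (n+1)) (hij : i < j) (a : Fin n → A) :
    List.ofFn (a ∘ delta i j hij) =
      (List.ofFn a).take j ++
        a ⟨i, lt_of_lt_of_le (Fin.lt_def.mp hij) (Nat.lt_succ_iff.mp j.isLt)⟩ ::
        (List.ofFn a).drop j := by
  have hj : (j:ℕ) ≤ n := Nat.lt_succ_iff.mp j.isLt
  have hlen1 : ((List.ofFn a).take (j:ℕ)).length = (j:ℕ) := by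
    simp [hj]
  apply List.ext_getElem
  · simp [hj]; omega
  · intro t h1 h2
    simp only [List.getElem_ofFn, Function.comp_apply, delta]
    by_cases hlt : t < (j:ℕ)
    · rw [List.getElem_append_left (by omega)]
      rw [dif_pos hlt]
      simp
    · rw [List.getElem_append_right (by omega)]
      by_cases heq : t = (j:ℕ)
      · rw [dif_neg hlt, dif_pos heq]
        simp [hlen1, heq]
      · rw [dif_neg hlt, dif_neg heq]
        have ht : t - ((List.ofFn a).take (j:ℕ)).length - 1 <
            ((List.ofFn a).drop (j:ℕ)).length := by
          simp only [List.length_ofFn] at h1 ⊢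
          simp [hlen1, List.length_drop]
          omega
        rw [List.getElem_cons]
        rw [dif_neg (by rw [hlen1]; omega)]
        rw [List.getElem_drop]
        simp only [List.getElem_ofFn]
        congr 1
        simp only [Fin.ext_iff]
        simp [hlen1]
        omega

lemma ofoFun_delta {A : Type*} [DecidableEq A] {n : ℕ} (i j : Fin (n+1)) (hij : i < j)
    (a : Fin n → A) : ofoFun (a ∘ delta i j hij) = ofoFun a := by
  have hi : (i:ℕ) < n := lt_of_lt_of_le (Fin.lt_def.mp hij) (Nat.lt_succ_iff.mp j.isLt)
  have hj : (j:ℕ) ≤ n := Nat.lt_succ_iff.mp j.isLt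
  unfold ofoFun
  rw [ofFn_delta i j hij a]
  have hmem : a ⟨i, hi⟩ ∈ (List.ofFn a).take (j:ℕ) := by
    have hlt : (i:ℕ) < ((List.ofFn a).take (j:ℕ)).length := by
      simp [hj]; exact Fin.lt_def.mp hij
    have : ((List.ofFn a).take (j:ℕ))[(i:ℕ)] = a ⟨i, hi⟩ := by
      rw [List.getElem_take]
      simp
    rw [← this]
    exact List.getElem_mem hlt
  rw [ofo_middle _ _ _ hmem, List.take_append_drop]

/-- If f = f* ∘ ofo on A^n, then every identification minor f_I equals
f* ∘ ofo on A^{n-1}; in particular all identification minors of f are equal. -/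
theorem ofo_determined_unique_identification_minor {A B : Type*} [DecidableEq A] {n : ℕ}
    (f : (Fin (n + 1) → A) → B) (fstar : List A → B)
    (hf : ∀ b : Fin (n + 1) → A, f b = fstar (ofoFun b)) :
    (∀ (i j : Fin (n + 1)) (hij : i < j) (a : Fin n → A),
      f (a ∘ delta i j hij) = fstar (ofoFun a)) ∧
    (∀ (i j : Fin (n + 1)) (hij : i < j) (k l : Fin (n + 1)) (hkl : k < l)
      (a : Fin n → A), f (a ∘ delta i j hij) = f (a ∘ delta k l hkl)) := by
  have key : ∀ (i j : Fin (n + 1)) (hij : i < j) (a : Fin n → A),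
      f (a ∘ delta i j hij) = fstar (ofoFun a) := by
    intro i j hij a
    rw [hf, ofoFun_delta]
  exact ⟨key, fun i j hij k l hkl a => by rw [key i j hij a, key k l hkl a]⟩
end

section
/- For every permutation σ of {1,...,n} and every two-element subset I of {1,...,n}, there exists a permutation σ̂ of {1,...,n-1} such that σ̂ ∘ δ_{σ^{-1}(I)} = δ_I ∘ σ and σ̂(min σ^{-1}(I)) = min I. -/
/-- For every permutation σ of the index set and every 2-element subset
I = {i,j} (i < j), writing σ⁻¹(I) = {k,l} with k < l, there is a permutation σ̂ of
the smaller index set with σ̂ ∘ δ_{σ⁻¹(I)} = δ_I ∘ σ and σ̂(min σ⁻¹(I)) = min I. -/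
def sec {n : ℕ} (l : Fin (n + 1)) : Fin n → Fin (n + 1) := fun x =>
  if (x : ℕ) < (l : ℕ) then ⟨x, by omega⟩ else ⟨(x : ℕ) + 1, by omega⟩

lemma val_delta {n : ℕ} (i j : Fin (n + 1)) (hij : i < j) (t : Fin (n + 1)) :
    ((delta i j hij t : Fin n) : ℕ) =
      if (t : ℕ) < (j : ℕ) then (t : ℕ) else if (t : ℕ) = (j : ℕ) then (i : ℕ)
      else (t : ℕ) - 1 := by
  simp only [delta]
  split_ifs <;> rfl

lemma val_sec {n : ℕ} (l : Fin (n + 1)) (x : Fin n) :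
    ((sec l x : Fin (n + 1)) : ℕ) = if (x : ℕ) < (l : ℕ) then (x : ℕ) else (x : ℕ) + 1 := by
  simp only [sec]
  split_ifs <;> rfl

lemma delta_eq_delta {n : ℕ} {i j : Fin (n + 1)} {hij : i < j} {a b : Fin (n+1)}
    (h : delta i j hij a = delta i j hij b) :
    a = b ∨ (a = i ∧ b = j) ∨ (a = j ∧ b = i) := by
  have hij' : (i : ℕ) < (j : ℕ) := hij
  simp only [Fin.ext_iff, val_delta] at h ⊢
  split_ifs at h <;> omega

lemma sec_ne {n : ℕ} (l : Fin (n + 1)) (x : Fin n) : sec l x ≠ l := by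
  have hx := x.isLt
  simp only [ne_eq, Fin.ext_iff, val_sec]
  split_ifs <;> omega

lemma sec_inj {n : ℕ} (l : Fin (n + 1)) : Function.Injective (sec l) := by
  intro x y h
  simp only [Fin.ext_iff, val_sec] at h ⊢
  split_ifs at h <;> omega

lemma delta_sec {n : ℕ} (k l : Fin (n + 1)) (hkl : k < l) (x : Fin n) :
    delta k l hkl (sec l x) = x := by
  simp only [Fin.ext_iff, val_delta, val_sec]
  split_ifs <;> omega

lemma sec_delta {n : ℕ} (k l : Fin (n + 1)) (hkl : k < l) (t : Fin (n + 1)) (ht : t ≠ l) :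
    sec l (delta k l hkl t) = t := by
  have ht' : (t : ℕ) ≠ (l : ℕ) := fun h => ht (Fin.ext h)
  have hkl' : (k : ℕ) < (l : ℕ) := hkl
  have := t.isLt
  simp only [Fin.ext_iff, val_sec, val_delta]
  split_ifs <;> omega

lemma sec_delta_self {n : ℕ} (k l : Fin (n + 1)) (hkl : k < l) :
    sec l (delta k l hkl l) = k := by
  have hkl' : (k : ℕ) < (l : ℕ) := hkl
  simp only [Fin.ext_iff, val_sec, val_delta]
  split_ifs <;> omega

lemma delta_self {n : ℕ} (i j : Fin (n + 1)) (hij : i < j) :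
    delta i j hij j = delta i j hij i := by
  have hij' : (i : ℕ) < (j : ℕ) := hij
  simp only [Fin.ext_iff, val_delta]
  split_ifs <;> omega

theorem exists_hat_sigma {n : ℕ} (σ : Equiv.Perm (Fin (n + 1)))
    (i j : Fin (n + 1)) (hij : i < j) (k l : Fin (n + 1)) (hkl : k < l)
    (hI : (σ⁻¹ i = k ∧ σ⁻¹ j = l) ∨ (σ⁻¹ i = l ∧ σ⁻¹ j = k)) :
    ∃ σhat : Equiv.Perm (Fin n),
      (∀ t : Fin (n + 1), σhat (delta k l hkl t) = delta i j hij (σ t)) ∧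
      σhat (delta k l hkl k) = delta i j hij i := by
  have hki : σ k = i ∨ σ k = j := by
    rcases hI with ⟨h1, h2⟩ | ⟨h1, h2⟩
    · left; rw [← h1]; simp
    · right; rw [← h2]; simp
  have hli : σ l = i ∨ σ l = j := by
    rcases hI with ⟨h1, h2⟩ | ⟨h1, h2⟩
    · right; rw [← h2]; simp
    · left; rw [← h1]; simp
  have hmem : ∀ u : Fin (n+1), σ u = i ∨ σ u = j → u = k ∨ u = l := by
    intro u hu
    rcases hI with ⟨h1, h2⟩ | ⟨h1, h2⟩ <;> rcases hu with hu | hu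
    · left; rw [← h1, ← hu]; simp
    · right; rw [← h2, ← hu]; simp
    · right; rw [← h1, ← hu]; simp
    · left; rw [← h2, ← hu]; simp
  have hinj : Function.Injective (fun x => delta i j hij (σ (sec l x))) := by
    intro x y hxy
    rcases delta_eq_delta hxy with h | ⟨h1, h2⟩ | ⟨h1, h2⟩
    · exact sec_inj l (σ.injective h)
    · have hx' : sec l x = k := (hmem _ (Or.inl h1)).resolve_right (sec_ne l x)
      have hy' : sec l y = k := (hmem _ (Or.inr h2)).resolve_right (sec_ne l y)
      exact sec_inj l (hx'.trans hy'.symm)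
    · have hx' : sec l x = k := (hmem _ (Or.inr h1)).resolve_right (sec_ne l x)
      have hy' : sec l y = k := (hmem _ (Or.inl h2)).resolve_right (sec_ne l y)
      exact sec_inj l (hx'.trans hy'.symm)
  set σhat : Equiv.Perm (Fin n) :=
    Equiv.ofBijective _ (Finite.injective_iff_bijective.mp hinj) with hσhat
  have happ : ∀ x : Fin n, σhat x = delta i j hij (σ (sec l x)) := fun x => rfl
  have hkey : ∀ t : Fin (n + 1), σhat (delta k l hkl t) = delta i j hij (σ t) := by
    intro t
    rw [happ]
    by_cases ht : t = l
    · rw [ht, sec_delta_self k l hkl]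
      rcases hki with h1 | h1 <;> rcases hli with h2 | h2 <;> rw [h1, h2] <;>
        first
          | rfl
          | exact delta_self i j hij
          | exact (delta_self i j hij).symm
    · rw [sec_delta k l hkl t ht]
  refine ⟨σhat, hkey, ?_⟩
  rw [hkey k]
  rcases hki with h | h
  · rw [h]
  · rw [h]; exact delta_self i j hij
end

section
/- Let n > |A| + 1 and f : A^n → B. If f is totally symmetric and determined by the order of first occurrence, then f is determined by supp: there is a map f'' : P(A) → B such that f(a) = f''({a_1,...,a_n}) for all a ∈ A^n. -/
/-- If two tuples have permutationally equal lists of values, they differ by a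
permutation of the index set. -/
lemma aux_exists_perm {A : Type*} [LinearOrder A] {n : ℕ} (a b : Fin n → A)
    (h : (List.ofFn a).Perm (List.ofFn b)) : ∃ σ : Equiv.Perm (Fin n), a ∘ σ = b := by
  have h1 : (List.ofFn (a ∘ Tuple.sort a)).Perm (List.ofFn (b ∘ Tuple.sort b)) :=
    ((Tuple.sort a).ofFn_comp_perm a).trans (h.trans ((Tuple.sort b).ofFn_comp_perm b).symm)
  have hs1 : (List.ofFn (a ∘ Tuple.sort a)).SortedLE :=
    List.sortedLE_ofFn_iff.mpr (Tuple.monotone_sort a)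
  have hs2 : (List.ofFn (b ∘ Tuple.sort b)).SortedLE :=
    List.sortedLE_ofFn_iff.mpr (Tuple.monotone_sort b)
  have heq : a ∘ Tuple.sort a = b ∘ Tuple.sort b :=
    List.ofFn_injective (List.Perm.eq_of_sortedLE hs1 hs2 h1)
  refine ⟨((Tuple.sort b)⁻¹).trans (Tuple.sort a), ?_⟩
  funext i
  have := congrFun heq ((Tuple.sort b)⁻¹ i)
  simpa using this

/-- dedup of `m ++ l` is dedup of `l` when every element of `m` occurs in `l`. -/
lemma aux_dedup_append {A : Type*} [DecidableEq A] (m l : List A) (h : ∀ x ∈ m, x ∈ l) :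
    (m ++ l).dedup = l.dedup := by
  induction m with
  | nil => simp
  | cons x m ih =>
    have hx : x ∈ m ++ l := List.mem_append_right m (h x (by simp))
    simp only [List.cons_append, List.dedup_cons_of_mem hx]
    exact ih fun y hy => h y (by simp [hy])

/-- If n > |A| + 1 and f : A^n → B is totally symmetric and determined by
the order of first occurrence, then f is determined by supp. -/
theorem totally_symmetric_ofo_determined_by_supp {A B : Type*} [Fintype A] [DecidableEq A]
    {n : ℕ} (hn : Fintype.card A + 1 < n)
    (f : (Fin n → A) → B)
    (hsym : ∀ (σ : Equiv.Perm (Fin n)) (a : Fin n → A), f (a ∘ σ) = f a)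
    (hofo : ∃ fstar : List A → B, ∀ a : Fin n → A, f a = fstar (ofoFun a)) :
    ∃ g : Set A → B, ∀ a : Fin n → A, f a = g (Set.range a) := by
  obtain ⟨fstar, hf⟩ := hofo
  letI : LinearOrder A := LinearOrder.lift' (Fintype.equivFin A) (Equiv.injective _)
  refine ⟨fun S => fstar (Set.Finite.toFinset (Set.toFinite S)).toList, fun a => ?_⟩
  set l : List A := (Set.Finite.toFinset (Set.toFinite (Set.range a))).toList with hl
  have hlnd : l.Nodup := Finset.nodup_toList _
  have hlmem : ∀ x, x ∈ l ↔ x ∈ Set.range a := by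
    intro x; rw [hl, Finset.mem_toList, Set.Finite.mem_toFinset]
  set M : Multiset A := (List.ofFn a : Multiset A) with hM
  have hmemM : ∀ x, x ∈ M ↔ x ∈ Set.range a := by
    intro x; simp [hM, List.mem_ofFn]
  have hle : (l : Multiset A) ≤ M := by
    rw [Multiset.le_iff_subset (by exact hlnd)]
    intro x hx
    exact (hmemM x).mpr ((hlmem x).mp hx)
  set rest : List A := (M - (l : Multiset A)).toList with hrest
  set m : List A := l ++ rest with hm
  have hmM : (m : Multiset A) = M := by
    rw [hm, hrest, ← Multiset.coe_add, Multiset.coe_toList, add_comm,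
      tsub_add_cancel_of_le hle]
  have hperm : (List.ofFn a).Perm m := by
    rw [← Multiset.coe_eq_coe, hmM]
  -- realize m as a tuple
  have hlen : m.length = n := by
    have := hperm.length_eq
    simpa [List.length_ofFn] using this.symm
  set b : Fin n → A := fun i => m.get (Fin.cast hlen.symm i) with hb
  have hofnb : List.ofFn b = m := by
    refine List.ext_get (by simp [hlen]) ?_
    intro i h1 h2
    simp [hb, List.get_ofFn]
  obtain ⟨σ, hσ⟩ := aux_exists_perm a b (by rw [hofnb]; exact hperm)
  have hfb : f a = f b := by rw [← hσ, hsym]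
  -- compute ofoFun b = l
  have hrestmem : ∀ x ∈ rest, x ∈ l := by
    intro x hx
    rw [hrest, Multiset.mem_toList] at hx
    have : x ∈ M := Multiset.mem_of_le (Multiset.sub_le_self _ _) hx
    exact (hlmem x).mpr ((hmemM x).mp this)
  have hofob : ofoFun b = l := by
    rw [ofoFun, hofnb, ofo, hm, List.reverse_append]
    rw [aux_dedup_append _ _ (fun x hx => by
      rw [List.mem_reverse] at hx ⊢; exact hrestmem x hx)]
    rw [List.Nodup.dedup (List.nodup_reverse.mpr hlnd), List.reverse_reverse]
  rw [hfb, hf b, hofob]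
end

section
/- Let n > |A| + 1 and f : A^n → B. Suppose f is determined by the order of first occurrence and for all two-element subsets I, J of {1,...,n} there exists a bijection π_{IJ} of {1,...,n-1} with π_{IJ}(min J) = min I and f(aδ_I) = f(aπ_{IJ}δ_J) for all a ∈ A^{n-1}. Then f is totally symmetric. -/
set_option maxHeartbeats 1000000

set_option linter.unusedSectionVars false

namespace OfoAux

section Part1
variable {A : Type*} [DecidableEq A]

@[simp] lemma ofo_nil : ofo ([] : List A) = [] := rfl

lemma dedup_append_singleton (M : List A) (x : A) :
    (M ++ [x]).dedup = (M.dedup.filter (fun y => decide (y ≠ x))) ++ [x] := by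
  induction M with
  | nil => simp
  | cons a M ih =>
    by_cases h : a ∈ M ++ [x]
    · rw [List.cons_append, List.dedup_cons_of_mem h, ih]
      rcases List.mem_append.mp h with h' | h'
      · rw [List.dedup_cons_of_mem h']
      · simp only [List.mem_singleton] at h'
        subst h'
        by_cases h2 : a ∈ M
        · rw [List.dedup_cons_of_mem h2]
        · rw [List.dedup_cons_of_notMem h2]
          simp [List.filter_cons]
    · have h1 : a ∉ M := fun hh => h (List.mem_append.mpr (Or.inl hh))
      have h2 : ¬ (a = x) := by
        intro hh; exact h (List.mem_append.mpr (Or.inr (by simp [hh])))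
      rw [List.cons_append, List.dedup_cons_of_notMem h, ih, List.dedup_cons_of_notMem h1]
      simp [List.filter_cons, h2]

lemma ofo_cons (x : A) (l : List A) :
    ofo (x :: l) = x :: (ofo l).filter (fun y => decide (y ≠ x)) := by
  unfold ofo
  rw [List.reverse_cons, dedup_append_singleton]
  rw [List.reverse_append, List.reverse_singleton]
  simp [List.filter_reverse]

@[simp] lemma mem_ofo {y : A} {l : List A} : y ∈ ofo l ↔ y ∈ l := by
  unfold ofo; simp

lemma nodup_ofo (l : List A) : (ofo l).Nodup := by
  unfold ofo; exact List.nodup_reverse.mpr (List.nodup_dedup _)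

lemma ofo_of_nodup {l : List A} (h : l.Nodup) : ofo l = l := by
  unfold ofo
  rw [List.Nodup.dedup (List.nodup_reverse.mpr h), List.reverse_reverse]

lemma ofo_append (l₁ l₂ : List A) :
    ofo (l₁ ++ l₂) = ofo l₁ ++ (ofo l₂).filter (fun y => decide (y ∉ l₁)) := by
  induction l₁ with
  | nil => simp
  | cons x l₁ ih =>
    rw [List.cons_append, ofo_cons, ih, ofo_cons, List.filter_append, List.filter_filter,
      List.cons_append]
    congr 1
    congr 1
    apply List.filter_congr
    intro y _
    by_cases h1 : y = x <;> by_cases h2 : y ∈ l₁ <;> simp [h1, h2]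

lemma ofo_filter (p : A → Bool) (l : List A) :
    (ofo l).filter p = ofo (l.filter p) := by
  induction l with
  | nil => simp
  | cons x l ih =>
    by_cases h : p x = true
    · have hr : List.filter p (x :: l) = x :: List.filter p l := by
        simp [List.filter_cons, h]
      have hl : List.filter p (x :: (ofo l).filter (fun y => decide (y ≠ x)))
          = x :: List.filter p ((ofo l).filter (fun y => decide (y ≠ x))) := by
        simp [List.filter_cons, h]
      rw [ofo_cons, hl, hr, ofo_cons, ← ih, List.filter_filter, List.filter_filter]
      congr 1
      apply List.filter_congr
      intro y _
      by_cases h1 : y = x <;> simp [h1]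
    · have hr : List.filter p (x :: l) = List.filter p l := by
        simp [List.filter_cons, h]
      have hl : List.filter p (x :: (ofo l).filter (fun y => decide (y ≠ x)))
          = List.filter p ((ofo l).filter (fun y => decide (y ≠ x))) := by
        simp [List.filter_cons, h]
      rw [ofo_cons, hl, hr, ← ih, List.filter_filter]
      apply List.filter_congr
      intro y _
      by_cases h1 : y = x
      · subst h1; simp [h]
      · simp [h1]

lemma ofo_cons_cons (x : A) (l : List A) : ofo (x :: x :: l) = ofo (x :: l) := by
  rw [ofo_cons, ofo_cons]
  have hl : List.filter (fun y => decide (y ≠ x)) (x :: (ofo l).filter (fun y => decide (y ≠ x)))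
      = List.filter (fun y => decide (y ≠ x)) ((ofo l).filter (fun y => decide (y ≠ x))) := by
    simp [List.filter_cons]
  rw [hl, List.filter_filter]
  congr 1
  apply List.filter_congr
  intro y _
  by_cases h1 : y = x <;> simp [h1]

lemma ofo_map_inj {B : Type*} [DecidableEq B] {u : A → B} (hu : Function.Injective u)
    (l : List A) : ofo (l.map u) = (ofo l).map u := by
  induction l with
  | nil => simp
  | cons x l ih =>
    rw [List.map_cons, ofo_cons, ofo_cons, ih, List.map_cons, List.filter_map]
    congr 2
    apply List.filter_congr
    intro y _
    by_cases h1 : y = x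
    · subst h1; simp
    · simp [h1, hu.ne h1]

lemma ofo_cons_of_get (x : A) (T : List A) (h : 0 < T.length) (hx : T[0] = x) :
    ofo (x :: T) = ofo T := by
  cases T with
  | nil => simp at h
  | cons y T' => simp only [List.getElem_cons_zero] at hx; subst hx; exact ofo_cons_cons y T'

lemma ofo_append_singleton_mem (l : List A) (x : A) (h : x ∈ l) :
    ofo (l ++ [x]) = ofo l := by
  rw [ofo_append]
  have : ofo [x] = [x] := by rw [ofo_cons]; simp
  rw [this]
  simp [List.filter_cons, h]


end Part1

section Part2
variable {A : Type*} [DecidableEq A]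

lemma delta_coe {n : ℕ} (i j : Fin (n+1)) (hij : i < j) (t : Fin (n+1)) :
    ((delta i j hij t : Fin n) : ℕ)
      = if (t : ℕ) < (j : ℕ) then (t:ℕ) else if (t:ℕ) = (j:ℕ) then (i:ℕ) else (t:ℕ) - 1 := by
  unfold delta
  split_ifs <;> rfl

/-- The inserted-duplicate lemma when inserting at the last position. -/
lemma ofoFun_delta_last {n : ℕ} (i j : Fin (n+1)) (hij : i < j) (hj : (j:ℕ) = n)
    (a : Fin n → A) : ofoFun (a ∘ delta i j hij) = ofoFun a := by
  have hi : (i:ℕ) < n := by have := Fin.lt_def.mp hij; omega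
  have hlist : List.map (a ∘ delta i j hij) (List.finRange (n+1))
      = List.map a (List.finRange n) ++ [a ⟨i, hi⟩] := by
    apply List.ext_getElem
    · simp
    · intro s h1 h2
      simp only [List.getElem_map, List.getElem_finRange, Function.comp_apply]
      by_cases hs : s < n
      · rw [List.getElem_append_left (by simpa using hs)]
        simp only [List.getElem_map, List.getElem_finRange]
        congr 1
        apply Fin.ext
        rw [delta_coe]
        simp only [Fin.coe_cast]
        split_ifs <;> omega
      · have hs' : s = n := by simp at h1; omega
        subst hs'
        rw [List.getElem_append_right (by simp)]
        simp only [List.length_map, List.length_finRange, Nat.sub_self,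
          List.getElem_singleton]
        congr 1
        apply Fin.ext
        rw [delta_coe]
        simp only [Fin.coe_cast]
        split_ifs <;> omega
  unfold ofoFun
  rw [List.ofFn_eq_map, List.ofFn_eq_map, hlist]
  exact ofo_append_singleton_mem _ _ (List.mem_map.mpr ⟨⟨i,hi⟩, List.mem_finRange _, rfl⟩)

/-- The inserted-duplicate lemma for I = {0,1}. -/
lemma ofoFun_delta_first {n : ℕ} (k l : Fin (n+1)) (hkl : k < l) (hk : (k:ℕ) = 0)
    (hl : (l:ℕ) = 1) (c : Fin n → A) : ofoFun (c ∘ delta k l hkl) = ofoFun c := by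
  have h0n : 0 < n := by have := Fin.lt_def.mp hkl; have := l.isLt; omega
  have hlist : List.map (c ∘ delta k l hkl) (List.finRange (n+1))
      = c ⟨0, h0n⟩ :: List.map c (List.finRange n) := by
    apply List.ext_getElem
    · simp
    · intro s h1 h2
      simp only [List.getElem_map, List.getElem_finRange, Function.comp_apply]
      match s, h1, h2 with
      | 0, h1, h2 =>
        rw [List.getElem_cons_zero]
        congr 1
        apply Fin.ext
        rw [delta_coe]
        simp only [Fin.coe_cast]
        split_ifs <;> omega
      | (s+1), h1, h2 =>
        rw [List.getElem_cons_succ]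
        simp only [List.getElem_map, List.getElem_finRange]
        congr 1
        apply Fin.ext
        rw [delta_coe]
        simp only [Fin.coe_cast]
        split_ifs <;> omega
  unfold ofoFun
  rw [List.ofFn_eq_map, List.ofFn_eq_map, hlist]
  apply ofo_cons_of_get _ _ (by simpa using h0n)
  simp only [List.getElem_map, List.getElem_finRange]
  exact congrArg c (Fin.ext (by simp))

end Part2

/-- `vmap n m d t = t` if `t < m`, else `d`. -/
def vmap (n m : ℕ) (d : Fin m) : Fin n → Fin m := fun t =>
  if h : (t : ℕ) < m then ⟨t, h⟩ else d

def downm (n m : ℕ) : Fin n → Option (Fin m) := fun t =>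
  if h : (t : ℕ) < m then some ⟨t, h⟩ else none

lemma ofo_map_vmap_finRange {n m : ℕ} (hm : m < n) (d : Fin m) :
    ofo (List.map (vmap n m d) (List.finRange n)) = List.finRange m := by
  have hE : List.map (vmap n m d) (List.finRange n)
      = List.finRange m ++ List.replicate (n - m) d := by
    apply List.ext_getElem
    · simp; omega
    · intro s h1 h2
      simp only [List.getElem_map, List.getElem_finRange]
      by_cases hs : s < m
      · rw [List.getElem_append_left (by simpa using hs)]
        simp only [List.getElem_finRange]
        unfold vmap
        rw [dif_pos (by simpa using hs)]
        apply Fin.ext; simp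
      · rw [List.getElem_append_right (by simpa using hs)]
        rw [List.getElem_replicate]
        unfold vmap
        rw [dif_neg (by simpa using hs)]
  rw [hE, ofo_append, ofo_of_nodup (List.nodup_finRange m)]
  have : List.filter (fun y => decide (y ∉ List.finRange m)) (ofo (List.replicate (n - m) d))
      = [] := by
    apply List.filter_eq_nil_iff.mpr
    intro y _
    simp [List.mem_finRange]
  rw [this, List.append_nil]

lemma filter_map_vmap {n m : ℕ} (d : Fin m) (tl : List (Fin n)) :
    (tl.map (vmap n m d)).filter (fun y => decide (y ≠ d))
      = (tl.filterMap (downm n m)).filter (fun y => decide (y ≠ d)) := by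
  induction tl with
  | nil => simp
  | cons w tl ih =>
    by_cases hw : (w : ℕ) < m
    · simp only [List.map_cons, List.filterMap_cons, vmap, downm, dif_pos hw,
        List.filter_cons]
      rw [ih]
    · simp only [List.map_cons, List.filterMap_cons, vmap, downm, dif_neg hw,
        List.filter_cons]
      simpa using ih

/-- the word `(π 0, π 1, ..., π (n-1))` -/
def PiWord {n : ℕ} (π : Equiv.Perm (Fin n)) : List (Fin n) := List.map π (List.finRange n)

def Lam {n : ℕ} (π : Equiv.Perm (Fin n)) (m : ℕ) : List (Fin m) :=
  (PiWord π).filterMap (downm n m)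

lemma downm_inj {n m : ℕ} : ∀ (a a' : Fin n), ∀ b ∈ downm n m a, b ∈ downm n m a' → a = a' := by
  intro a a' b hb hb'
  unfold downm at hb hb'
  by_cases h : (a:ℕ) < m
  · rw [dif_pos h] at hb
    by_cases h' : (a':ℕ) < m
    · rw [dif_pos h'] at hb'
      simp only [Option.mem_def, Option.some_inj] at hb hb'
      apply Fin.ext
      have : ((⟨(a:ℕ), h⟩ : Fin m) : ℕ) = ((⟨(a':ℕ), h'⟩ : Fin m) : ℕ) := by
        rw [hb, ← hb']
      simpa using this
    · rw [dif_neg h'] at hb'; simp at hb'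
  · rw [dif_neg h] at hb; simp at hb

lemma nodup_Lam {n m : ℕ} (π : Equiv.Perm (Fin n)) : (Lam π m).Nodup :=
  List.Nodup.filterMap downm_inj
    (List.Nodup.map (Equiv.injective π) (List.nodup_finRange n))

lemma mem_Lam {n m : ℕ} (hm : m < n) (π : Equiv.Perm (Fin n)) (e : Fin m) : e ∈ Lam π m := by
  apply List.mem_filterMap.mpr
  refine ⟨⟨(e:ℕ), lt_trans e.isLt hm⟩, ?_, ?_⟩
  · apply List.mem_map.mpr
    exact ⟨π.symm _, List.mem_finRange _, Equiv.apply_symm_apply _ _⟩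
  · unfold downm
    rw [dif_pos (by simpa using e.isLt)]

lemma length_Lam {n m : ℕ} (hm : m < n) (π : Equiv.Perm (Fin n)) : (Lam π m).length = m := by
  rw [← List.toFinset_card_of_nodup (nodup_Lam π)]
  have : (Lam π m).toFinset = Finset.univ := by
    apply Finset.eq_univ_iff_forall.mpr
    intro e
    rw [List.mem_toFinset]
    exact mem_Lam hm π e
  rw [this, Finset.card_univ, Fintype.card_fin]

/-- main computation on the π side -/
lemma ofo_map_vmap_PiWord {n m : ℕ} (hm : m < n) (π : Equiv.Perm (Fin n))
    (hpin : π ⟨0, by omega⟩ = ⟨n-1, by omega⟩) (d : Fin m) :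
    ofo (List.map (vmap n m d) (PiWord π))
      = d :: (Lam π m).filter (fun y => decide (y ≠ d)) := by
  have hne : PiWord π ≠ [] := by
    intro h
    have : (PiWord π).length = n := by unfold PiWord; simp
    rw [h] at this
    simp at this; omega
  obtain ⟨hd, tl, hcons⟩ := List.exists_cons_of_ne_nil hne
  have h0 : (PiWord π).head? = some (π ⟨0, by omega⟩) := by
    obtain ⟨n', hn'⟩ : ∃ n', n = n' + 1 := ⟨n-1, by omega⟩
    subst hn'
    unfold PiWord
    rw [List.finRange_succ, List.map_cons, List.head?_cons]
    congr 2
  have hhd : hd = π ⟨0, by omega⟩ := by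
    rw [hcons, List.head?_cons] at h0
    simpa using h0
  have hhdval : ((hd : Fin n) : ℕ) = n - 1 := by rw [hhd, hpin]
  have hvd : vmap n m d hd = d := by
    unfold vmap; rw [dif_neg (by omega)]
  have hdown : downm n m hd = none := by
    unfold downm; rw [dif_neg (by omega)]
  have hnodtl : tl.Nodup := by
    have : (PiWord π).Nodup := List.Nodup.map (Equiv.injective π) (List.nodup_finRange n)
    rw [hcons] at this
    exact this.of_cons
  have hnod2 : (tl.filterMap (downm n m)).Nodup := List.Nodup.filterMap downm_inj hnodtl
  have hLam : Lam π m = tl.filterMap (downm n m) := by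
    unfold Lam; rw [hcons, List.filterMap_cons, hdown]
  rw [hcons, List.map_cons, hvd, ofo_cons, ofo_filter, filter_map_vmap,
    ofo_of_nodup (List.Nodup.filter _ hnod2), hLam]


lemma list_perm_decomp {m' : ℕ} (L : List (Fin (m'+1))) (hlen : L.length = m'+1)
    (hgetinj : ∀ i j (hi : i < L.length) (hj : j < L.length), L[i] = L[j] → i = j)
    (Θ : Equiv.Perm (Fin (m'+1)))
    (hΘapp : ∀ k : Fin (m'+1), Θ k = L[(k:ℕ)]'(by rw [hlen]; exact k.isLt))
    (d : Fin (m'+1)) :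
    (d :: L.filter (fun y => decide (y ≠ d)))
      = List.map (fun k => Θ ((Fin.cycleRange (Θ.symm d))⁻¹ k)) (List.finRange (m'+1)) := by
  set t := Θ.symm d with htdef
  have htlen : (t:ℕ) < L.length := by rw [hlen]; exact t.isLt
  have htL : L[(t:ℕ)]'htlen = d := by
    have h := Θ.apply_symm_apply d
    rw [hΘapp] at h
    exact h
  have hfd : L.filter (fun y => decide (y ≠ d)) = L.take (t:ℕ) ++ L.drop ((t:ℕ)+1) := by
    conv_lhs => rw [← List.take_append_drop (t:ℕ) L,
      ← List.getElem_cons_drop htlen]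
    rw [List.filter_append]
    have hhead : List.filter (fun y => decide (y ≠ d)) (L[(t:ℕ)]'htlen :: L.drop ((t:ℕ)+1))
          = List.filter (fun y => decide (y ≠ d)) (L.drop ((t:ℕ)+1)) := by
      rw [List.filter_cons, htL]
      simp
    rw [hhead]
    rw [List.filter_eq_self.mpr ?htake, List.filter_eq_self.mpr ?hdrop]
    case htake =>
      intro y hy
      obtain ⟨i, hi, rfl⟩ := List.mem_iff_getElem.mp hy
      have hit : i < (t:ℕ) := by
        have h2 := hi
        rw [List.length_take] at h2
        omega
      rw [List.getElem_take]
      simp only [decide_eq_true_eq, ne_eq]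
      intro hEq
      have := hgetinj i (t:ℕ) (by omega) htlen (by rw [hEq, htL])
      omega
    case hdrop =>
      intro y hy
      obtain ⟨i, hi, rfl⟩ := List.mem_iff_getElem.mp hy
      have hilen : (t:ℕ)+1+i < L.length := by
        have h2 := hi
        rw [List.length_drop] at h2
        omega
      rw [List.getElem_drop]
      simp only [decide_eq_true_eq, ne_eq]
      intro hEq
      have := hgetinj ((t:ℕ)+1+i) (t:ℕ) hilen htlen (by rw [hEq, htL])
      omega
  rw [hfd]
  apply List.ext_getElem
  · rw [List.length_cons, List.length_append, List.length_take, List.length_drop,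
      List.length_map, List.length_finRange]
    omega
  · intro k hk1 hk2
    have hkm : k < m' + 1 := by
      rw [List.length_map, List.length_finRange] at hk2
      exact hk2
    simp only [List.getElem_map, List.getElem_finRange]
    match k, hk1, hk2, hkm with
    | 0, hk1, hk2, hkm =>
      rw [List.getElem_cons_zero]
      simp only [Fin.cast_mk]
      have hinv0 : (Fin.cycleRange t)⁻¹ (⟨0, hkm⟩ : Fin (m'+1)) = t := by
        apply Equiv.Perm.inv_eq_iff_eq.mpr
        rw [show (⟨0, hkm⟩ : Fin (m'+1)) = 0 from by apply Fin.ext; simp]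
        exact (Fin.cycleRange_self t).symm
      rw [hinv0, hΘapp, htL]
    | (k'+1), hk1, hk2, hkm =>
      rw [List.getElem_cons_succ]
      simp only [Fin.cast_mk]
      have htm : (t:ℕ) ≤ m' := by omega
      have hlentake : (L.take (t:ℕ)).length = (t:ℕ) := by
        rw [List.length_take]; omega
      by_cases hk't : k' < (t:ℕ)
      · have hinv : (Fin.cycleRange t)⁻¹ ⟨k'+1, hkm⟩ = ⟨k', by omega⟩ := by
          apply Equiv.Perm.inv_eq_iff_eq.mpr
          rw [Fin.cycleRange_of_lt (by rw [Fin.lt_def]; simpa using hk't)]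
          apply Fin.ext
          rw [Fin.val_add_one_of_lt (by rw [Fin.lt_def, Fin.val_last]; simp; omega)]
        rw [List.getElem_append_left (by rw [hlentake]; omega), List.getElem_take,
          hinv, hΘapp]
      · have hinv : (Fin.cycleRange t)⁻¹ ⟨k'+1, hkm⟩ = ⟨k'+1, hkm⟩ := by
          apply Equiv.Perm.inv_eq_iff_eq.mpr
          exact (Fin.cycleRange_of_gt (by rw [Fin.lt_def]; simp; omega)).symm
        rw [List.getElem_append_right (by rw [hlentake]; omega)]
        rw [hinv, hΘapp, List.getElem_drop]
        have hidx : ((t:ℕ))+1+(k' - (L.take (t:ℕ)).length) = k'+1 := by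
          rw [hlentake]; omega
        simp only [hidx]


variable {A : Type*} [DecidableEq A]

/-- the invariance predicate -/
def Qp {A : Type*} {B : Type*} (fstar : List A → B) (m : ℕ)
    (ρ : Equiv.Perm (Fin m)) : Prop :=
  ∀ v : Fin m → A, Function.Injective v →
    fstar (List.map v (List.finRange m)) = fstar (List.map (v ∘ ρ) (List.finRange m))

section QpBasic
variable {B : Type*} (fstar : List A → B) {m : ℕ}

lemma Qp_one : Qp fstar m 1 := by
  intro v hv; rfl

lemma Qp_mul {ρ1 ρ2 : Equiv.Perm (Fin m)} (h1 : Qp fstar m ρ1) (h2 : Qp fstar m ρ2) :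
    Qp fstar m (ρ1 * ρ2) := by
  intro v hv
  rw [h1 v hv, h2 (v ∘ ρ1) (hv.comp ρ1.injective)]
  rfl

lemma Qp_inv {ρ1 : Equiv.Perm (Fin m)} (h1 : Qp fstar m ρ1) : Qp fstar m ρ1⁻¹ := by
  intro v hv
  have h := h1 (v ∘ ⇑ρ1⁻¹) (hv.comp (Equiv.injective _))
  have h2 : (v ∘ ⇑ρ1⁻¹) ∘ ⇑ρ1 = v := by
    funext k
    simp
  rw [h2] at h
  exact h.symm

end QpBasic


lemma core {B : Type*} {n m : ℕ} (hm : m < n) (fstar : List A → B)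
    (π : Equiv.Perm (Fin n)) (hpin : π ⟨0, by omega⟩ = ⟨n-1, by omega⟩)
    (hginv : ∀ c : Fin n → A, fstar (ofoFun c) = fstar (ofoFun (c ∘ π)))
    (u : Fin m → A) (hu : Function.Injective u) (ρ : Equiv.Perm (Fin m)) :
    fstar (List.map u (List.finRange m)) = fstar (List.map (u ∘ ρ) (List.finRange m)) := by
  rcases Nat.eq_zero_or_pos m with hm0 | hm1
  · subst hm0
    have : u ∘ ⇑ρ = u := by funext k; exact absurd k.isLt (by simp)
    rw [this]
  obtain ⟨m', rfl⟩ : ∃ m', m = m' + 1 := ⟨m - 1, by omega⟩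
  -- the fundamental move
  have move : ∀ (v : Fin (m'+1) → A), Function.Injective v → ∀ d : Fin (m'+1),
      fstar (List.map v (List.finRange (m'+1)))
        = fstar (List.map v (d :: (Lam π (m'+1)).filter (fun y => decide (y ≠ d)))) := by
    intro v hv d
    have h1 : ofoFun (v ∘ vmap n (m'+1) d) = List.map v (List.finRange (m'+1)) := by
      unfold ofoFun
      rw [List.ofFn_eq_map, ← List.map_map, ofo_map_inj hv, ofo_map_vmap_finRange hm]
    have h2 : ofoFun ((v ∘ vmap n (m'+1) d) ∘ π)
        = List.map v (d :: (Lam π (m'+1)).filter (fun y => decide (y ≠ d))) := by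
      unfold ofoFun
      rw [List.ofFn_eq_map]
      have hc : List.map ((v ∘ vmap n (m'+1) d) ∘ ⇑π) (List.finRange n)
          = List.map v (List.map (vmap n (m'+1) d) (PiWord π)) := by
        unfold PiWord
        rw [List.map_map, List.map_map]
      rw [hc]
      rw [ofo_map_inj (u := v) hv (List.map (vmap n (m'+1) d) (PiWord π))]
      rw [ofo_map_vmap_PiWord hm π hpin d]
    have h := hginv (v ∘ vmap n (m'+1) d)
    rw [h1, h2] at h
    exact h
  -- the ordering permutation Θ
  have hlen : (Lam π (m'+1)).length = m' + 1 := length_Lam hm π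
  have hnodL : (Lam π (m'+1)).Nodup := nodup_Lam π
  have hgetinj : ∀ i j (hi : i < (Lam π (m'+1)).length) (hj : j < (Lam π (m'+1)).length),
      (Lam π (m'+1))[i] = (Lam π (m'+1))[j] → i = j := by
    intro i j hi hj hij
    have hinj := List.nodup_iff_injective_get.mp hnodL
    have h2 := @hinj ⟨i, hi⟩ ⟨j, hj⟩ (by simpa [List.get_eq_getElem] using hij)
    simpa using h2
  have hΘbij : Function.Bijective
      (fun k : Fin (m'+1) => (Lam π (m'+1))[(k:ℕ)]'(by rw [hlen]; exact k.isLt)) := by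
    rw [← Finite.injective_iff_bijective]
    intro k1 k2 h
    exact Fin.ext (hgetinj _ _ _ _ h)
  set Θ : Equiv.Perm (Fin (m'+1)) := Equiv.ofBijective _ hΘbij with hΘdef
  have hΘapp : ∀ k : Fin (m'+1), Θ k = (Lam π (m'+1))[(k:ℕ)]'(by rw [hlen]; exact k.isLt) :=
    fun k => rfl
  have key : ∀ d : Fin (m'+1),
      (d :: (Lam π (m'+1)).filter (fun y => decide (y ≠ d)))
        = List.map (fun k => Θ ((Fin.cycleRange (Θ.symm d))⁻¹ k)) (List.finRange (m'+1)) :=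
    fun d => list_perm_decomp (Lam π (m'+1)) hlen hgetinj Θ hΘapp d
  -- permutations satisfying the invariance
  have hP : ∀ d : Fin (m'+1), Qp fstar (m'+1) (Θ * (Fin.cycleRange (Θ.symm d))⁻¹) := by
    intro d v hv
    rw [move v hv d, key d, List.map_map]
    rfl
  have hΘQ : Qp fstar (m'+1) Θ := by
    have h := hP (Θ 0)
    rw [Equiv.symm_apply_apply, Fin.cycleRange_zero, inv_one, mul_one] at h
    exact h
  have hcycinv : ∀ s : Fin (m'+1), Qp fstar (m'+1) (Fin.cycleRange s)⁻¹ := by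
    intro s
    have h := hP (Θ s)
    rw [Equiv.symm_apply_apply] at h
    have h2 := Qp_mul fstar (Qp_inv fstar hΘQ) h
    rwa [inv_mul_cancel_left] at h2
  have hcyc : ∀ s : Fin (m'+1), Qp fstar (m'+1) (Fin.cycleRange s) := by
    intro s
    have h := Qp_inv fstar (hcycinv s)
    rwa [inv_inv] at h
  have hswap0 : ∀ s : Fin (m'+1), Qp fstar (m'+1) (Equiv.swap 0 s) := by
    intro s
    by_cases hs0 : s = 0
    · subst hs0
      rw [Equiv.swap_self]
      exact Qp_one fstar
    · have hsv : 1 ≤ (s:ℕ) := by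
        rcases Nat.eq_zero_or_pos (s:ℕ) with h | h
        · exact absurd (Fin.ext (by simpa using h)) hs0
        · exact h
      set s' : Fin (m'+1) := ⟨(s:ℕ) - 1, by omega⟩ with hs'def
      have hs'v : (s' : ℕ) = (s:ℕ) - 1 := rfl
      have hid : Equiv.swap 0 s * Fin.cycleRange s' = Fin.cycleRange s := by
        apply Equiv.ext
        intro k
        simp only [Equiv.Perm.mul_apply]
        rcases lt_trichotomy k s' with hk | hk | hk
        · have hkv : (k:ℕ) < (s:ℕ) - 1 := by
            have := Fin.lt_def.mp hk
            simpa [hs'v] using this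
          rw [Fin.cycleRange_of_lt hk, Fin.cycleRange_of_lt (by rw [Fin.lt_def]; omega)]
          have hk1v : ((k+1 : Fin (m'+1)) : ℕ) = (k:ℕ)+1 := by
            apply Fin.val_add_one_of_lt
            rw [Fin.lt_def, Fin.val_last]
            have := s.isLt
            omega
          apply Equiv.swap_apply_of_ne_of_ne
          · apply Fin.ne_of_val_ne
            rw [hk1v, Fin.val_zero]
            omega
          · apply Fin.ne_of_val_ne
            rw [hk1v]
            omega
        · rw [hk, Fin.cycleRange_self, Fin.cycleRange_of_lt (by rw [Fin.lt_def]; omega),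
            Equiv.swap_apply_left]
          apply Fin.ext
          rw [Fin.val_add_one_of_lt (by rw [Fin.lt_def, Fin.val_last]; omega)]
          omega
        · have hkv : (s:ℕ) - 1 < (k:ℕ) := by
            have := Fin.lt_def.mp hk
            simpa [hs'v] using this
          rw [Fin.cycleRange_of_gt hk]
          by_cases hkt : k = s
          · rw [hkt, Fin.cycleRange_self, Equiv.swap_apply_right]
          · have hkv2 : (k:ℕ) ≠ (s:ℕ) := fun h => hkt (Fin.ext h)
            rw [Fin.cycleRange_of_gt (by rw [Fin.lt_def]; omega)]
            apply Equiv.swap_apply_of_ne_of_ne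
            · apply Fin.ne_of_val_ne
              rw [Fin.val_zero]
              omega
            · exact hkt
      have hswapeq : Equiv.swap 0 s = Fin.cycleRange s * (Fin.cycleRange s')⁻¹ :=
        eq_mul_inv_of_mul_eq hid
      rw [hswapeq]
      exact Qp_mul fstar (hcyc s) (hcycinv s')
  have hswapall : ∀ x y : Fin (m'+1), x ≠ y → Qp fstar (m'+1) (Equiv.swap x y) := by
    intro x y hxy
    by_cases hx : x = 0
    · subst hx; exact hswap0 y
    · by_cases hy : y = 0
      · subst hy; rw [Equiv.swap_comm]; exact hswap0 x
      · have hid := Equiv.swap_mul_swap_mul_swap (x := y) (y := (0 : Fin (m'+1))) (z := x)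
          hy (Ne.symm hxy)
        rw [← hid, Equiv.swap_comm y 0]
        exact Qp_mul fstar (Qp_mul fstar (hswap0 x) (hswap0 y)) (hswap0 x)
  have hall : ∀ ρ' : Equiv.Perm (Fin (m'+1)), Qp fstar (m'+1) ρ' := by
    intro ρ'
    refine Equiv.Perm.swap_induction_on ρ' (Qp_one fstar) ?_
    intro g x y hxy hg
    exact Qp_mul fstar (hswapall x y hxy) hg
  exact hall ρ u hu


end OfoAux

/-- If n > |A| + 1, f is determined by the order of first occurrence, and
for all 2-subsets I, J there is a bijection π_{IJ} with π_{IJ}(min J) = min I and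
f(aδ_I) = f(aπ_{IJ}δ_J) for all a, then f is totally symmetric. -/
theorem ofo_determined_piIJ_totally_symmetric {A B : Type*} [Fintype A] [DecidableEq A]
    {n : ℕ} (hn : Fintype.card A + 1 < n + 1)
    (f : (Fin (n + 1) → A) → B)
    (hofo : ∃ fstar : List A → B, ∀ b : Fin (n + 1) → A, f b = fstar (ofoFun b))
    (hpi : ∀ (i j : Fin (n + 1)) (hij : i < j) (k l : Fin (n + 1)) (hkl : k < l),
      ∃ π : Equiv.Perm (Fin n),
        π (delta k l hkl k) = delta i j hij i ∧
        ∀ a : Fin n → A, f (a ∘ delta i j hij) = f ((a ∘ π) ∘ delta k l hkl)) :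
    ∀ (σ : Equiv.Perm (Fin (n + 1))) (a : Fin (n + 1) → A), f (a ∘ σ) = f a := by
  obtain ⟨fstar, hfst⟩ := hofo
  have hcard : Fintype.card A < n := by omega
  have hn1 : 1 ≤ n := by omega
  have p1 : n - 1 < n + 1 := by omega
  have p2 : n < n + 1 := by omega
  have p3 : 0 < n + 1 := by omega
  have p4 : 1 < n + 1 := by omega
  have p5 : 0 < n := hn1
  have p6 : n - 1 < n := by omega
  intro σ a
  have hij : (⟨n-1, p1⟩ : Fin (n+1)) < ⟨n, p2⟩ := by
    rw [Fin.lt_def]; simp; omega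
  have hkl : (⟨0, p3⟩ : Fin (n+1)) < ⟨1, p4⟩ := by
    rw [Fin.lt_def]; simp
  have e1 : delta (⟨0, p3⟩ : Fin (n+1)) ⟨1, p4⟩ hkl ⟨0, p3⟩ = (⟨0, p5⟩ : Fin n) := by
    apply Fin.ext
    rw [OfoAux.delta_coe]
    norm_num
  have e2 : delta (⟨n-1, p1⟩ : Fin (n+1)) ⟨n, p2⟩ hij ⟨n-1, p1⟩ = (⟨n-1, p6⟩ : Fin n) := by
    apply Fin.ext
    rw [OfoAux.delta_coe]
    simp only []
    rw [if_pos (by simp; omega)]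
  obtain ⟨π, hπ0, hπ⟩ := hpi ⟨n-1, p1⟩ ⟨n, p2⟩ hij ⟨0, p3⟩ ⟨1, p4⟩ hkl
  rw [e1, e2] at hπ0
  have hginv : ∀ c : Fin n → A, fstar (ofoFun c) = fstar (ofoFun (c ∘ π)) := by
    intro c
    have h := hπ c
    rw [hfst, hfst, OfoAux.ofoFun_delta_last _ _ hij rfl c,
      OfoAux.ofoFun_delta_first _ _ hkl rfl rfl (c ∘ ⇑π)] at h
    exact h
  -- the two ofo lists
  have hnodM : (ofoFun a).Nodup := OfoAux.nodup_ofo _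
  have hnodM' : (ofoFun (a ∘ σ)).Nodup := OfoAux.nodup_ofo _
  have hmem : ∀ y, y ∈ ofoFun (a ∘ σ) ↔ y ∈ ofoFun a := by
    intro y
    unfold ofoFun
    rw [OfoAux.mem_ofo, OfoAux.mem_ofo, List.mem_ofFn, List.mem_ofFn]
    constructor
    · rintro ⟨t, ht⟩
      exact ⟨σ t, ht⟩
    · rintro ⟨t, ht⟩
      exact ⟨σ.symm t, by simpa using ht⟩
  have hlen' : (ofoFun (a ∘ σ)).length = (ofoFun a).length := by
    rw [← List.toFinset_card_of_nodup hnodM, ← List.toFinset_card_of_nodup hnodM']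
    congr 1
    ext y
    simp only [List.mem_toFinset]
    exact hmem y
  have hmlt : (ofoFun a).length < n := by
    have h1 : (ofoFun a).toFinset.card ≤ Fintype.card A := Finset.card_le_univ _
    rw [List.toFinset_card_of_nodup hnodM] at h1
    omega
  -- the tuples of distinct values
  set M := ofoFun a with hMdef
  set M' := ofoFun (a ∘ σ) with hM'def
  have hu : Function.Injective M.get := List.nodup_iff_injective_get.mp hnodM
  have hu' : Function.Injective M'.get := List.nodup_iff_injective_get.mp hnodM'
  set u : Fin M.length → A := M.get with hudef
  set u' : Fin M.length → A := fun x => M'.get (Fin.cast hlen'.symm x) with hu'def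
  have hmapu : List.map u (List.finRange M.length) = M := List.map_get_finRange M
  have hmapu' : List.map u' (List.finRange M.length) = M' := by
    apply List.ext_getElem
    · simp [hlen']
    · intro s h1 h2
      simp only [List.getElem_map, List.getElem_finRange, hu'def, Fin.cast_mk,
        List.get_eq_getElem]
  have hsurj : ∀ x, ∃ x', u x' = u' x := by
    intro x
    have h1 : u' x ∈ M' := by
      rw [hu'def]
      simp only [List.get_eq_getElem]
      exact List.getElem_mem _
    rw [hmem] at h1
    obtain ⟨i, hi⟩ := List.mem_iff_get.mp h1
    exact ⟨i, hi⟩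
  choose ρf hρf using hsurj
  have hρinj : Function.Injective ρf := by
    intro x1 x2 h
    have : u' x1 = u' x2 := by rw [← hρf x1, ← hρf x2, h]
    have h2 : Function.Injective u' := by
      intro y1 y2 hy
      have h3 : Fin.cast hlen'.symm y1 = Fin.cast hlen'.symm y2 := hu' hy
      exact Fin.ext (by simpa using congrArg Fin.val h3)
    exact h2 this
  set ρ : Equiv.Perm (Fin M.length) :=
    Equiv.ofBijective ρf (Finite.injective_iff_bijective.mp hρinj) with hρdef
  have hcomp : u ∘ ρ = u' := by
    funext x
    exact hρf x
  have hmain := OfoAux.core hmlt fstar π hπ0 hginv u hu ρ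
  rw [hmapu, hcomp, hmapu'] at hmain
  rw [hfst (a ∘ σ), hfst a]
  exact hmain.symm
end

section
/- Let |A| = k ≥ 2, |B| ≥ 2, n = k+1. There exists a function f : A^n → B all of whose identification minors f_I are equivalent to a common function determined by the order of first occurrence (hence f has a unique identification minor), but f itself is not equivalent to any n-ary function determined by the order of first occurrence; moreover if k > 2 then the invariance group of f is trivial, so f is not 2-set-transitive. -/
namespace UIM16

lemma mem_ofo {A : Type*} [DecidableEq A] {x : A} {l : List A} : x ∈ ofo l ↔ x ∈ l := by
  simp [ofo]

lemma nodup_ofo {A : Type*} [DecidableEq A] (l : List A) : (ofo l).Nodup :=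
  List.nodup_reverse.mpr (l.reverse.nodup_dedup)

lemma ofo_of_nodup {A : Type*} [DecidableEq A] {l : List A} (h : l.Nodup) : ofo l = l := by
  rw [ofo, List.dedup_eq_self.mpr (List.nodup_reverse.mpr h), List.reverse_reverse]

lemma eq_of_ofo_eq {A : Type*} [DecidableEq A] {l L : List A} (h : ofo l = L)
    (hlen : L.length = l.length) : l = L := by
  have hs : l.reverse.dedup = l.reverse := by
    apply (List.dedup_sublist l.reverse).eq_of_length
    have : (ofo l).length = L.length := by rw [h]
    simpa [ofo] using this.trans hlen
  rw [← h, ofo, hs, List.reverse_reverse]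

lemma ofo_append_singleton {A : Type*} [DecidableEq A] {x : A} {l : List A} (h : x ∈ l) :
    ofo (l ++ [x]) = ofo l := by
  rw [ofo, ofo, List.reverse_append]
  simp only [List.reverse_singleton, List.singleton_append]
  rw [List.dedup_cons_of_mem (List.mem_reverse.mpr h)]

/-- numeric values of the witness tuple `d_{i,j}`. -/
def dNat (i j t : ℕ) : ℕ :=
  if t = i ∨ t = j then 0 else if t < i then t + 1 else if t < j then t else t - 1

lemma dNat_lt {k i j t : ℕ} (hij : i < j) (hj : j ≤ k) (ht : t ≤ k) : dNat i j t < k := by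
  unfold dNat; split_ifs <;> omega

lemma dNat_mono {i j t t' : ℕ} (hij : i < j) (h1 : ¬(t = i ∨ t = j)) (h2 : ¬(t' = i ∨ t' = j))
    (h : t < t') : dNat i j t < dNat i j t' := by
  unfold dNat; split_ifs <;> omega

lemma dNat_inj {i j t t' : ℕ} (hij : i < j) (h : dNat i j t = dNat i j t') :
    t = t' ∨ ((t = i ∨ t = j) ∧ (t' = i ∨ t' = j)) := by
  unfold dNat at h; split_ifs at h <;> omega

lemma dNat_eq_zero {i j t : ℕ} (hij : i < j) : dNat i j t = 0 ↔ t = i ∨ t = j := by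
  unfold dNat
  split_ifs <;> simp_all <;> omega

/-- The witness tuple `d_{i,j} : Fin (k+1) → A`. -/
def dTup {A : Type*} (k : ℕ) (e : A ≃ Fin k) (i j : Fin (k + 1)) (hij : i < j) :
    Fin (k + 1) → A := fun t =>
  e.symm ⟨dNat i j t, dNat_lt (Fin.lt_def.mp hij) (Nat.lt_succ_iff.mp j.isLt)
    (Nat.lt_succ_iff.mp t.isLt)⟩

lemma dTup_eq_iff {A : Type*} {k : ℕ} (e : A ≃ Fin k) {i j i' j' : Fin (k + 1)}
    (hij : i < j) (hij' : i' < j') {t t' : Fin (k + 1)} :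
    dTup k e i j hij t = dTup k e i' j' hij' t' ↔ dNat i j t = dNat i' j' t' := by
  constructor
  · intro h
    have := e.symm.injective h
    exact congrArg Fin.val this
  · intro h
    unfold dTup
    congr 1
    exact Fin.ext h

instance decAux {A : Type*} [DecidableEq A] {k : ℕ} (e : A ≃ Fin k)
    (b : Fin (k + 1) → A) (i j : Fin (k + 1)) :
    Decidable (∃ hij : i < j, b = dTup k e i j hij) :=
  if h : i < j then
    decidable_of_iff (b = dTup k e i j h) ⟨fun hb => ⟨h, hb⟩, fun ⟨_, hb⟩ => hb⟩
  else isFalse (fun ⟨h', _⟩ => h h')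

/-- The witness function `f`. -/
def fW {A B : Type*} [DecidableEq A] (k : ℕ) (e : A ≃ Fin k) (α β : B) :
    (Fin (k + 1) → A) → B := fun b =>
  if ∃ i j : Fin (k + 1), ∃ hij : i < j, b = dTup k e i j hij then α else β

/-- the permutation τ_i of `Fin k`. -/
def tauEquiv (k : ℕ) (i : Fin k) : Equiv.Perm (Fin k) where
  toFun u := ⟨if (u : ℕ) = i then 0 else if (u : ℕ) < i then u + 1 else u, by
    have := i.isLt; have := u.isLt; split_ifs <;> omega⟩
  invFun v := ⟨if (v : ℕ) = 0 then i else if (v : ℕ) ≤ i then v - 1 else v, by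
    have := i.isLt; have := v.isLt; split_ifs <;> omega⟩
  left_inv u := by
    have := i.isLt; have := u.isLt
    apply Fin.ext; dsimp only; split_ifs <;> simp_all <;> omega
  right_inv v := by
    have := i.isLt; have := v.isLt
    apply Fin.ext; dsimp only; split_ifs <;> simp_all <;> omega

lemma tauEquiv_val (k : ℕ) (i : Fin k) (u : Fin k) :
    (tauEquiv k i u : ℕ) =
      if (u : ℕ) = i then (0 : ℕ) else if (u : ℕ) < i then (u : ℕ) + 1 else (u : ℕ) := rfl

lemma delta_val {n : ℕ} (i j : Fin (n + 1)) (hij : i < j) (t : Fin (n + 1)) :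
    ((delta i j hij t : Fin n) : ℕ) =
      if (t : ℕ) < j then (t : ℕ) else if (t : ℕ) = j then (i : ℕ) else (t : ℕ) - 1 := by
  unfold delta; split_ifs <;> rfl

lemma tau_delta {k : ℕ} (i j : Fin (k + 1)) (hij : i < j) (i' : Fin k) (hi' : (i' : ℕ) = i)
    (t : Fin (k + 1)) : (tauEquiv k i' (delta i j hij t) : ℕ) = dNat i j t := by
  rw [tauEquiv_val, delta_val, dNat]
  have hij' := Fin.lt_def.mp hij
  have := t.isLt; have := j.isLt
  split_ifs <;> omega


lemma dTup_eq_tau {A : Type*} {k : ℕ} (e : A ≃ Fin k) (i j : Fin (k + 1)) (hij : i < j)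
    (i' : Fin k) (hi' : (i' : ℕ) = (i : ℕ)) (t : Fin (k + 1)) :
    dTup k e i j hij t = e.symm (tauEquiv k i' (delta i j hij t)) := by
  unfold dTup
  congr 1
  exact (Fin.ext (tau_delta i j hij i' hi' t)).symm

lemma delta_surj {n : ℕ} (i j : Fin (n + 1)) (hij : i < j) (u : Fin n) :
    ∃ t, delta i j hij t = u := by
  have hjn : (j : ℕ) ≤ n := Nat.lt_succ_iff.mp j.isLt
  have hun : (u : ℕ) < n := u.isLt
  by_cases hu : (u : ℕ) < (j : ℕ)
  · refine ⟨⟨u, by omega⟩, Fin.ext ?_⟩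
    rw [delta_val]
    dsimp only
    rw [if_pos hu]
  · refine ⟨⟨(u : ℕ) + 1, by omega⟩, Fin.ext ?_⟩
    rw [delta_val]
    dsimp only
    rw [if_neg (by omega), if_neg (by omega)]
    omega

lemma dTup01_surj {A : Type*} {k : ℕ} (hk : 1 ≤ k) (e : A ≃ Fin k)
    (h01 : (⟨0, by omega⟩ : Fin (k + 1)) < ⟨1, by omega⟩) :
    Function.Surjective (dTup k e ⟨0, by omega⟩ ⟨1, by omega⟩ h01) := by
  intro v
  have hvk : ((e v : Fin k) : ℕ) < k := (e v).isLt
  by_cases h0 : ((e v : Fin k) : ℕ) = 0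
  · refine ⟨⟨0, by omega⟩, ?_⟩
    unfold dTup
    rw [Equiv.symm_apply_eq]
    apply Fin.ext
    dsimp only
    unfold dNat
    split_ifs <;> (try simp_all) <;> omega
  · refine ⟨⟨((e v : Fin k) : ℕ) + 1, by omega⟩, ?_⟩
    unfold dTup
    rw [Equiv.symm_apply_eq]
    apply Fin.ext
    dsimp only
    unfold dNat
    split_ifs <;> (try simp_all) <;> omega

end UIM16
/-- for |A| = k ≥ 2 and |B| ≥ 2, there is a function f : A^{k+1} → B all
of whose identification minors are equivalent to one common function determined by the
order of first occurrence, while f itself is not equivalent to any function determined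
by the order of first occurrence; if k > 2 then the invariance group of f is trivial. -/
theorem exists_uim_not_ofo_not_2st {A B : Type*} [Fintype A] [DecidableEq A] {k : ℕ}
    (hk : 2 ≤ k) (hcard : Fintype.card A = k)
    (hB : ∃ x y : B, x ≠ y) :
    ∃ f : (Fin (k + 1) → A) → B,
      (∃ fstar : List A → B, ∀ (i j : Fin (k + 1)) (hij : i < j),
        ∃ σ : Equiv.Perm (Fin k), ∀ a : Fin k → A,
          f (a ∘ delta i j hij) = fstar (ofoFun (a ∘ σ))) ∧
      (¬ ∃ (fstar : List A → B) (σ : Equiv.Perm (Fin (k + 1))),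
        ∀ b : Fin (k + 1) → A, f b = fstar (ofoFun (b ∘ σ))) ∧
      (2 < k → ∀ σ : Equiv.Perm (Fin (k + 1)),
        (∀ b : Fin (k + 1) → A, f (b ∘ σ) = f b) → σ = 1) := by
  classical
  obtain ⟨α, β, hab⟩ := hB
  have e : A ≃ Fin k := Fintype.equivFinOfCardEq hcard
  refine ⟨UIM16.fW k e α β, ?_, ?_, ?_⟩
  · -- Part 1
    refine ⟨fun l => if l = List.ofFn (fun m : Fin k => e.symm m) then α else β, ?_⟩
    intro i j hij
    have hjk : (j : ℕ) ≤ k := Nat.lt_succ_iff.mp j.isLt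
    have hijv : (i : ℕ) < (j : ℕ) := Fin.lt_def.mp hij
    refine ⟨(UIM16.tauEquiv k ⟨(i : ℕ), by omega⟩).symm, fun a => ?_⟩
    set i' : Fin k := ⟨(i : ℕ), by omega⟩ with hi'def
    have key : (a ∘ delta i j hij = UIM16.dTup k e i j hij) ↔
        (∀ u : Fin k, a u = e.symm (UIM16.tauEquiv k i' u)) := by
      constructor
      · intro h u
        obtain ⟨t, ht⟩ := UIM16.delta_surj i j hij u
        have h1 := congrFun h t
        rw [Function.comp_apply, UIM16.dTup_eq_tau e i j hij i' rfl, ht] at h1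
        exact h1
      · intro h
        funext t
        rw [Function.comp_apply, UIM16.dTup_eq_tau e i j hij i' rfl,
          h (delta i j hij t)]
    have key2 : (ofoFun (a ∘ (UIM16.tauEquiv k i').symm) =
        List.ofFn (fun m : Fin k => e.symm m)) ↔
        (∀ u : Fin k, a u = e.symm (UIM16.tauEquiv k i' u)) := by
      have hnodup : (List.ofFn (fun m : Fin k => e.symm m)).Nodup :=
        List.nodup_ofFn.mpr e.symm.injective
      constructor
      · intro hofo
        unfold ofoFun at hofo
        have hlen : (List.ofFn (fun m : Fin k => e.symm m)).length =
            (List.ofFn (a ∘ (UIM16.tauEquiv k i').symm)).length := by simp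
        have heq := UIM16.eq_of_ofo_eq hofo hlen
        have hfun : a ∘ (UIM16.tauEquiv k i').symm = fun m : Fin k => e.symm m :=
          List.ofFn_injective heq
        intro u
        have := congrFun hfun (UIM16.tauEquiv k i' u)
        rw [Function.comp_apply, Equiv.symm_apply_apply] at this
        exact this
      · intro h
        have hfun : a ∘ (UIM16.tauEquiv k i').symm = fun m : Fin k => e.symm m := by
          funext v
          rw [Function.comp_apply, h ((UIM16.tauEquiv k i').symm v),
            Equiv.apply_symm_apply]
        unfold ofoFun
        rw [hfun, UIM16.ofo_of_nodup hnodup]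
    by_cases hcase : ∀ u : Fin k, a u = e.symm (UIM16.tauEquiv k i' u)
    · show (if _ then α else β) = _
      rw [if_pos ⟨i, j, hij, key.mpr hcase⟩]
      show α = (if ofoFun (a ∘ (UIM16.tauEquiv k i').symm) =
          List.ofFn (fun m : Fin k => e.symm m) then α else β)
      rw [if_pos (key2.mpr hcase)]
    · have hnotd : ¬∃ i2 j2, ∃ h2 : i2 < j2,
          a ∘ delta i j hij = UIM16.dTup k e i2 j2 h2 := ?_
      · show (if _ then α else β) = _
        rw [if_neg hnotd]
        show β = (if ofoFun (a ∘ (UIM16.tauEquiv k i').symm) =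
            List.ofFn (fun m : Fin k => e.symm m) then α else β)
        rw [if_neg (fun hc => hcase (key2.mp hc))]
      rintro ⟨i2, j2, h2, hd⟩
      have hij2v : (i2 : ℕ) < (j2 : ℕ) := Fin.lt_def.mp h2
      have e1 : delta i j hij i = delta i j hij j := by
        apply Fin.ext
        rw [UIM16.delta_val, UIM16.delta_val, if_pos hijv, if_neg (lt_irrefl _),
          if_pos rfl]
      have e2 : UIM16.dTup k e i2 j2 h2 i = UIM16.dTup k e i2 j2 h2 j := by
        rw [← hd]
        exact congrArg a e1
      have e3 := (UIM16.dTup_eq_iff e h2 h2).mp e2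
      rcases UIM16.dNat_inj hij2v e3 with h' | h'
      · omega
      · have hi2 : i2 = i := Fin.ext (by omega)
        have hj2 : j2 = j := Fin.ext (by omega)
        subst hi2; subst hj2
        exact hcase (key.mp hd)
  · -- Part 2
    rintro ⟨fstar, σ, hf⟩
    have h01 : (⟨0, by omega⟩ : Fin (k + 1)) < ⟨1, by omega⟩ := Fin.mk_lt_mk.mpr one_pos
    obtain ⟨b, hbdef⟩ : ∃ b : Fin (k + 1) → A,
        b = UIM16.dTup k e ⟨0, by omega⟩ ⟨1, by omega⟩ h01 := ⟨_, rfl⟩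
    obtain ⟨L, hLdef⟩ : ∃ L : List A, L = ofo (List.ofFn (b ∘ σ)) := ⟨_, rfl⟩
    have hmem : ∀ v : A, v ∈ L := by
      intro v
      obtain ⟨s, hs⟩ := UIM16.dTup01_surj (by omega) e h01 v
      rw [hLdef]
      refine UIM16.mem_ofo.mpr (List.mem_ofFn.mpr ⟨σ.symm s, ?_⟩)
      rw [Function.comp_apply, Equiv.apply_symm_apply, hbdef, hs]
    have hnodup : L.Nodup := by rw [hLdef]; exact UIM16.nodup_ofo _
    have hlenL : L.length = k := by
      have h1 : L.toFinset = Finset.univ :=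
        Finset.eq_univ_iff_forall.mpr fun v => List.mem_toFinset.mpr (hmem v)
      have h2 := List.toFinset_card_of_nodup hnodup
      rw [h1, Finset.card_univ, hcard] at h2
      omega
    obtain ⟨v0, hv0def⟩ : ∃ v0 : A, v0 = e.symm ⟨1, by omega⟩ := ⟨_, rfl⟩
    obtain ⟨mn, hmlt, hm⟩ := List.mem_iff_getElem.mp (hmem v0)
    obtain ⟨c', hc'def⟩ : ∃ c' : Fin (k + 1) → A,
        c' = fun t : Fin (k + 1) => if h : (t : ℕ) < L.length then L[(t : ℕ)]'h else L[mn]'hmlt :=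
      ⟨_, rfl⟩
    have hofn : List.ofFn c' = L ++ [L[mn]'hmlt] := by
      apply List.ext_getElem
      · simp [hlenL]
      · intro n h1 h2
        rw [List.getElem_ofFn]
        have h1' : n < k + 1 := by simpa using h1
        have hcc := congrFun hc'def (⟨n, h1'⟩ : Fin (k + 1))
        by_cases hn : n < L.length
        · rw [List.getElem_append_left hn, hcc, dif_pos hn]
        · have hn' : n = L.length := by
            simp only [List.length_append, List.length_singleton] at h2
            omega
          rw [List.getElem_append_right (le_of_not_gt hn), hcc, dif_neg hn]
          subst hn'
          simp
    have hofo' : ofo (List.ofFn c') = L := by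
      rw [hofn, UIM16.ofo_append_singleton (List.getElem_mem hmlt),
        UIM16.ofo_of_nodup hnodup]
    have hfb : UIM16.fW k e α β b = α := by
      show (if _ then α else β) = α
      rw [if_pos ⟨_, _, h01, hbdef⟩]
    have hv0ne : (⟨1, by omega⟩ : Fin k) ≠ ⟨0, by omega⟩ := by
      intro h
      have := congrArg Fin.val h
      simp at this
    have hfb' : UIM16.fW k e α β (fun s => c' (σ.symm s)) = β := by
      show (if _ then α else β) = β
      rw [if_neg]
      rintro ⟨i2, j2, h2, hb'⟩
      have hij2v : (i2 : ℕ) < (j2 : ℕ) := Fin.lt_def.mp h2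
      have hmk : mn < k + 1 := by omega
      have hval : ∀ t : Fin (k + 1), c' t = UIM16.dTup k e i2 j2 h2 (σ t) := by
        intro t
        have h3 := congrFun hb' (σ t)
        simp only [Equiv.symm_apply_apply] at h3
        exact h3
      have hc1 : c' ⟨mn, hmk⟩ = v0 := by
        rw [hc'def]
        simp only
        rw [dif_pos (show ((⟨mn, hmk⟩ : Fin (k + 1)) : ℕ) < L.length from hmlt)]
        exact hm
      have hc2 : c' ⟨k, by omega⟩ = v0 := by
        rw [hc'def]
        simp only
        rw [dif_neg (show ¬(((⟨k, by omega⟩ : Fin (k + 1)) : ℕ) < L.length) from by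
          simp [hlenL])]
        exact hm
      have hd1 : UIM16.dTup k e i2 j2 h2 (σ ⟨mn, hmk⟩) = v0 := by
        rw [← hval _, hc1]
      have hd2 : UIM16.dTup k e i2 j2 h2 (σ ⟨k, by omega⟩) = v0 := by
        rw [← hval _, hc2]
      have hn1 : UIM16.dNat i2 j2 (σ ⟨mn, hmk⟩) = 1 := by
        have h4 := e.symm.injective (hd1.trans (hv0def))
        exact congrArg Fin.val h4
      have hn2 : UIM16.dNat i2 j2 (σ ⟨k, by omega⟩) = 1 := by
        have h4 := e.symm.injective (hd2.trans (hv0def))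
        exact congrArg Fin.val h4
      have ht12 : σ ⟨mn, hmk⟩ ≠ σ (⟨k, by omega⟩ : Fin (k + 1)) := by
        intro h
        have h5 := congrArg Fin.val (σ.injective h)
        simp only at h5
        omega
      rcases UIM16.dNat_inj hij2v (hn1.trans hn2.symm) with h' | h'
      · exact ht12 (Fin.ext h')
      · have h6 := (UIM16.dNat_eq_zero hij2v).mpr h'.1
        omega
    have hcontr : α = β := by
      have e1 := hf b
      have e2 := hf (fun s => c' (σ.symm s))
      rw [hfb] at e1
      rw [hfb'] at e2
      have hco : (fun s => c' (σ.symm s)) ∘ σ = c' := by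
        funext t; simp
      rw [show ofoFun ((fun s => c' (σ.symm s)) ∘ σ) = L from by
        rw [hco]; unfold ofoFun; exact hofo'] at e2
      rw [show ofoFun (b ∘ σ) = L from by unfold ofoFun; rw [hLdef]] at e1
      rw [e1, ← e2]
    exact hab hcontr
  · -- Part 3
    intro hk3 σ hinv
    have key : ∀ x y : Fin (k + 1), x < y → σ x < σ y := by
      have main : ∀ (i j : Fin (k + 1)) (hij : i < j) (x y : Fin (k + 1)), x < y →
          i ≠ σ x → i ≠ σ y → j ≠ σ x → j ≠ σ y → σ x < σ y := by
        intro i j hij x y hxy hi1 hi2 hj1 hj2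
        have hijv : (i : ℕ) < (j : ℕ) := Fin.lt_def.mp hij
        have hα : UIM16.fW k e α β (UIM16.dTup k e i j hij ∘ σ) = α := by
          rw [hinv]
          show (if _ then α else β) = α
          rw [if_pos ⟨i, j, hij, rfl⟩]
        have hex : ∃ i2 j2, ∃ h2 : i2 < j2,
            UIM16.dTup k e i j hij ∘ σ = UIM16.dTup k e i2 j2 h2 := by
          by_contra hne
          unfold UIM16.fW at hα
          rw [if_neg hne] at hα
          exact hab hα.symm
        obtain ⟨i2, j2, h2, hd⟩ := hex
        have hij2v : (i2 : ℕ) < (j2 : ℕ) := Fin.lt_def.mp h2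
        have hvals : ∀ t, UIM16.dNat i j (σ t) = UIM16.dNat i2 j2 t := fun t =>
          (UIM16.dTup_eq_iff e hij h2).mp (congrFun hd t)
        have hnotin : ∀ z : Fin (k + 1), i ≠ σ z → j ≠ σ z →
            ¬(((z : ℕ)) = i2 ∨ ((z : ℕ)) = j2) := by
          intro z hiz hjz hor
          have h0 : UIM16.dNat i2 j2 z = 0 := (UIM16.dNat_eq_zero hij2v).mpr hor
          have h1 : UIM16.dNat i j (σ z) = 0 := by rw [hvals z, h0]
          rcases (UIM16.dNat_eq_zero hijv).mp h1 with h | h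
          · exact hiz (Fin.ext h.symm)
          · exact hjz (Fin.ext h.symm)
        have hx2 := hnotin x hi1 hj1
        have hy2 := hnotin y hi2 hj2
        have hσx : ¬(((σ x : ℕ)) = i ∨ ((σ x : ℕ)) = j) := by
          rintro (h | h)
          · exact hi1 (Fin.ext h.symm)
          · exact hj1 (Fin.ext h.symm)
        have hσy : ¬(((σ y : ℕ)) = i ∨ ((σ y : ℕ)) = j) := by
          rintro (h | h)
          · exact hi2 (Fin.ext h.symm)
          · exact hj2 (Fin.ext h.symm)
        have hmono := UIM16.dNat_mono hij2v hx2 hy2 (Fin.lt_def.mp hxy)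
        rw [← hvals x, ← hvals y] at hmono
        rw [Fin.lt_def]
        by_contra hle
        push_neg at hle
        rcases eq_or_lt_of_le hle with heq | hlt
        · rw [show σ x = σ y from Fin.ext heq.symm] at hmono
          exact lt_irrefl _ hmono
        · have := UIM16.dNat_mono hijv hσy hσx hlt
          omega
      intro x y hxy
      have hcard2 : 1 < ((Finset.univ : Finset (Fin (k + 1))) \ {σ x, σ y}).card := by
        have h1 : ({σ x, σ y} : Finset (Fin (k + 1))).card ≤ 2 := by
          apply le_trans (Finset.card_insert_le _ _)
          simp
        rw [Finset.card_sdiff_of_subset (Finset.subset_univ _), Finset.card_univ,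
          Fintype.card_fin]
        omega
      obtain ⟨i, hi, j, hj, hij0⟩ := Finset.one_lt_card.mp hcard2
      simp only [Finset.mem_sdiff, Finset.mem_univ, Finset.mem_insert,
        Finset.mem_singleton, true_and, not_or] at hi hj
      rcases Ne.lt_or_gt hij0 with hlt | hlt
      · exact main i j hlt x y hxy hi.1 hi.2 hj.1 hj.2
      · exact main j i hlt x y hxy hj.1 hj.2 hi.1 hi.2
    have hsm : StrictMono (σ : Fin (k + 1) → Fin (k + 1)) := fun x y h => key x y h
    have hrange : Set.range (σ : Fin (k + 1) → Fin (k + 1)) = Set.range (id : Fin (k + 1) → Fin (k + 1)) := by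
      rw [Set.range_id, Equiv.range_eq_univ]
    haveI hwf : WellFoundedLT (Fin (k + 1)) := inferInstance
    have hid : (σ : Fin (k + 1) → Fin (k + 1)) = id :=
      (StrictMono.range_inj hsm strictMono_id).mp hrange
    exact Equiv.ext fun x => congrFun hid x
end

section
/- Identify A with {1,...,k}, k ≥ 2, n = k+1, and for each two-element subset I of {1,...,n} let d_I = (kρ_I)δ_I where k denotes the tuple (1,2,...,k), ρ_I is the cyclic shift sending position t to t + min I (mod k), and δ_I inserts a copy of the (min I)-th entry at position max I. Then in each d_I the only element of A occurring more than once is 1, and its two occurrences are exactly at the positions indexed by I. -/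
/-- The tuple d_I = (kρ_I)δ_I of the paper (0-indexed, with A identified with Fin k):
the underlying k-tuple has entry t - min I at position t (cyclic shift, so that the
entry at position min I is the element 0, the paper's element 1), and δ_I duplicates
that entry at position max I. -/
def dtuple {k : ℕ} (i j : Fin (k + 1)) (hij : i < j) : Fin (k + 1) → Fin k :=
  (fun t : Fin k =>
      t - ⟨(i : ℕ), lt_of_lt_of_le (Fin.lt_def.mp hij) (Nat.lt_succ_iff.mp j.isLt)⟩) ∘
    delta i j hij

/-- in d_I the only element of A occurring more than once is the paper's
element 1 (here 0 : Fin k), and its two occurrences are exactly at the positions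
indexed by I. -/
theorem dtuple_repeated_entry {k : ℕ} (hk : 2 ≤ k) (i j : Fin (k + 1)) (hij : i < j) :
    (dtuple i j hij i = ⟨0, by omega⟩ ∧ dtuple i j hij j = ⟨0, by omega⟩) ∧
    (∀ s t : Fin (k + 1), s ≠ t → dtuple i j hij s = dtuple i j hij t →
      dtuple i j hij s = ⟨0, by omega⟩ ∧ ((s = i ∧ t = j) ∨ (s = j ∧ t = i))) := by
  obtain ⟨m, rfl⟩ : ∃ m, k = m + 1 := ⟨k - 1, by omega⟩
  have hiv : (i : ℕ) < (j : ℕ) := Fin.lt_def.mp hij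
  have hdi : delta i j hij i = ⟨i, by omega⟩ := by
    simp [delta, hiv]
  have hdj : delta i j hij j = ⟨i, by omega⟩ := by
    simp [delta]
  have h0 : dtuple i j hij i = ⟨0, by omega⟩ ∧ dtuple i j hij j = ⟨0, by omega⟩ := by
    constructor <;> simp [dtuple, hdi, hdj, sub_self]
  refine ⟨h0, fun s t hst h => ?_⟩
  have hd : delta i j hij s = delta i j hij t := by
    have := sub_left_injective (G := Fin (m + 1)) h
    exact this
  have hvne : (s : ℕ) ≠ (t : ℕ) := fun hv => hst (Fin.ext hv)
  have hjk : (j : ℕ) < m + 2 := j.isLt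
  have hsk : (s : ℕ) < m + 2 := s.isLt
  have htk : (t : ℕ) < m + 2 := t.isLt
  simp only [delta] at hd
  split_ifs at hd <;> simp only [Fin.mk.injEq] at hd <;>
    first
    | omega
    | · have hsi : s = i := Fin.ext (by omega)
        have htj : t = j := Fin.ext (by omega)
        subst hsi htj
        exact ⟨h0.1, Or.inl ⟨rfl, rfl⟩⟩
    | · have hsj : s = j := Fin.ext (by omega)
        have hti : t = i := Fin.ext (by omega)
        subst hsj hti
        exact ⟨h0.2, Or.inr ⟨rfl, rfl⟩⟩
end

section
/- Let α ≠ β in B, A = {1,...,k} with k > 2, n = k+1, and let f : A^n → B take value α exactly on the set {d_I : I a 2-subset of {1,...,n}} and β elsewhere, where d_I = (i, i+1,...,k,1,...,i−1) with i = min I and with a second copy of i inserted at position max I. If σ ∈ S_n satisfies f = f ∘ σ-permutation, then σ is the identity; i.e., Inv f = {id}. -/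
private lemma modk {k : ℕ} (hk : 0 < k) (x : ℕ) (hx : x < 2 * k) :
    x % k = if x < k then x else x - k := by
  split_ifs with h
  · exact Nat.mod_eq_of_lt h
  · rw [Nat.mod_eq_sub_mod (Nat.le_of_not_lt h)]
    exact Nat.mod_eq_of_lt (by omega)

private lemma modk_cases {k x y : ℕ} (hk : 0 < k) (hx : x < 2 * k) (hy : y < 2 * k)
    (h : x % k = y % k) : x = y ∨ x + k = y ∨ y + k = x := by
  rw [modk hk x hx, modk hk y hy] at h
  split_ifs at h <;> omega

private lemma dtuple_val {k : ℕ} (i j : Fin (k + 1)) (hij : i < j) (t : Fin (k + 1)) :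
    (dtuple i j hij t).val =
      (if (t : ℕ) < (j : ℕ) then (t : ℕ) + (k - (i : ℕ))
       else if (t : ℕ) = (j : ℕ) then k
       else ((t : ℕ) - 1) + (k - (i : ℕ))) % k := by
  have hik : (i : ℕ) < k := lt_of_lt_of_le (Fin.lt_def.mp hij) (Nat.lt_succ_iff.mp j.isLt)
  unfold dtuple delta
  simp only [Function.comp_apply]
  split_ifs with h1 h2
  · rw [Fin.sub_def]
    show ((k - (i:ℕ)) + (t:ℕ)) % k = _
    congr 1
    omega
  · rw [Fin.sub_def]
    show ((k - (i:ℕ)) + (i:ℕ)) % k = _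
    congr 1
    omega
  · rw [Fin.sub_def]
    show ((k - (i:ℕ)) + ((t:ℕ) - 1)) % k = _
    congr 1
    omega

private lemma dtuple_zero_iff {k : ℕ} (hk : 0 < k) (i j : Fin (k + 1)) (hij : i < j)
    (t : Fin (k + 1)) : (dtuple i j hij t).val = 0 ↔ (t = i ∨ t = j) := by
  have hik : (i : ℕ) < k := lt_of_lt_of_le (Fin.lt_def.mp hij) (Nat.lt_succ_iff.mp j.isLt)
  have hjk : (j : ℕ) ≤ k := Nat.lt_succ_iff.mp j.isLt
  have htk : (t : ℕ) ≤ k := Nat.lt_succ_iff.mp t.isLt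
  have hij' : (i : ℕ) < (j : ℕ) := hij
  rw [dtuple_val, Fin.ext_iff, Fin.ext_iff, modk hk _ (by split_ifs <;> omega)]
  split_ifs <;> omega

private def dnat (k i j t : ℕ) : ℕ :=
  if t = j then 0
  else if t < j then (if i ≤ t then t - i else t + k - i)
  else (if i ≤ t - 1 then t - 1 - i else t - 1 + k - i)

private lemma dtuple_val' {k : ℕ} (i j : Fin (k + 1)) (hij : i < j) (t : Fin (k + 1)) :
    (dtuple i j hij t).val = dnat k (i:ℕ) (j:ℕ) (t:ℕ) := by
  have hik : (i : ℕ) < k := lt_of_lt_of_le (Fin.lt_def.mp hij) (Nat.lt_succ_iff.mp j.isLt)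
  have hjk : (j : ℕ) ≤ k := Nat.lt_succ_iff.mp j.isLt
  have htk : (t : ℕ) ≤ k := Nat.lt_succ_iff.mp t.isLt
  have hij' : (i : ℕ) < (j : ℕ) := hij
  rw [dtuple_val, modk (by omega) _ (by split_ifs <;> omega)]
  unfold dnat
  split_ifs <;> omega

set_option maxHeartbeats 1000000 in
/-- for k > 2, the function f taking value α exactly on the tuples d_I
and value β ≠ α elsewhere has trivial invariance group. -/
theorem dtuple_function_trivial_invariance {B : Type*} {k : ℕ} (hk : 2 < k)
    (α β : B) (hαβ : α ≠ β)
    (f : (Fin (k + 1) → Fin k) → B)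
    (hfα : ∀ (i j : Fin (k + 1)) (hij : i < j), f (dtuple i j hij) = α)
    (hfβ : ∀ b : Fin (k + 1) → Fin k,
      (∀ (i j : Fin (k + 1)) (hij : i < j), b ≠ dtuple i j hij) → f b = β)
    (σ : Equiv.Perm (Fin (k + 1)))
    (hσ : ∀ b : Fin (k + 1) → Fin k, f (b ∘ σ) = f b) :
    σ = 1 := by
  have hk0 : 0 < k := by omega
  have inj : Function.Injective σ := σ.injective
  -- named positions
  obtain ⟨z0, hz0⟩ : ∃ z : Fin (k+1), (z:ℕ) = 0 := ⟨⟨0, by omega⟩, rfl⟩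
  obtain ⟨z1, hz1⟩ : ∃ z : Fin (k+1), (z:ℕ) = 1 := ⟨⟨1, by omega⟩, rfl⟩
  obtain ⟨z2, hz2⟩ : ∃ z : Fin (k+1), (z:ℕ) = 2 := ⟨⟨2, by omega⟩, rfl⟩
  obtain ⟨L, hL⟩ : ∃ z : Fin (k+1), (z:ℕ) = k := ⟨⟨k, by omega⟩, rfl⟩
  have h01 : z0 < z1 := Fin.lt_def.mpr (by omega)
  have h02 : z0 < z2 := Fin.lt_def.mpr (by omega)
  have h12 : z1 < z2 := Fin.lt_def.mpr (by omega)
  have h0L : z0 < L := Fin.lt_def.mpr (by omega)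
  have h1L : z1 < L := Fin.lt_def.mpr (by omega)
  -- the key equation
  have KE : ∀ (i j : Fin (k+1)) (hij : i < j), ∃ (p q : Fin (k+1)) (hpq : p < q),
      ((σ p = i ∧ σ q = j) ∨ (σ p = j ∧ σ q = i)) ∧
      ∀ t, (dtuple i j hij (σ t)).val = (dtuple p q hpq t).val := by
    intro i j hij
    have hex : ∃ p q, ∃ hpq : p < q, (dtuple i j hij ∘ ⇑σ) = dtuple p q hpq := by
      by_contra hcon
      push_neg at hcon
      have h1 : f (dtuple i j hij ∘ ⇑σ) = β := hfβ _ (fun p q hpq => hcon p q hpq)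
      rw [hσ, hfα i j hij] at h1
      exact hαβ h1
    obtain ⟨p, q, hpq, heq⟩ := hex
    have hvt : ∀ t, (dtuple i j hij (σ t)).val = (dtuple p q hpq t).val := by
      intro t
      simpa using congrArg Fin.val (congrFun heq t)
    have hp : σ p = i ∨ σ p = j := by
      apply (dtuple_zero_iff hk0 i j hij (σ p)).mp
      rw [hvt p]
      exact (dtuple_zero_iff hk0 p q hpq p).mpr (Or.inl rfl)
    have hq : σ q = i ∨ σ q = j := by
      apply (dtuple_zero_iff hk0 i j hij (σ q)).mp
      rw [hvt q]
      exact (dtuple_zero_iff hk0 p q hpq q).mpr (Or.inr rfl)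
    refine ⟨p, q, hpq, ?_, hvt⟩
    rcases hp with hp | hp <;> rcases hq with hq | hq
    · exact absurd (inj (hp.trans hq.symm)) (ne_of_lt hpq)
    · exact Or.inl ⟨hp, hq⟩
    · exact Or.inr ⟨hp, hq⟩
    · exact absurd (inj (hp.trans hq.symm)) (ne_of_lt hpq)
  by_cases hA : σ L = L
  · -- CASE A : σ fixes the last position
    obtain ⟨a, q, haq, hor, hval⟩ := KE z0 L h0L
    rcases hor with ⟨ha0, hqL⟩ | ⟨haL, hq0⟩
    swap
    · exfalso
      have he : a = L := inj (haL.trans hA.symm)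
      rw [he, Fin.lt_def, hL] at haq
      have := q.isLt
      omega
    have hqL' : q = L := inj (hqL.trans hA.symm)
    have hqk : (q:ℕ) = k := by rw [hqL', hL]
    have hav : (a:ℕ) < k := by have := Fin.lt_def.mp haq; omega
    have ha0v : (σ a).val = 0 := by
      have := congrArg Fin.val ha0; omega
    have starA : ∀ t : Fin (k+1), (t:ℕ) ≠ (a:ℕ) → (t:ℕ) ≠ k →
        (σ t).val < k ∧ ((σ t).val + (a:ℕ) = (t:ℕ) ∨ (σ t).val + (a:ℕ) = (t:ℕ) + k ∨
          (σ t).val + (a:ℕ) + k = (t:ℕ)) := by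
      intro t ht1 ht2
      have h := hval t
      rw [dtuple_val', dtuple_val', hz0, hL, hqk] at h
      have hb1 := (σ t).isLt
      have hb2 := t.isLt
      clear * - h hk hz0 hL hqk hav ht1 ht2 hb1 hb2 hz0 hz1 hz2 hL
      simp only [dnat] at h
      split_ifs at h <;> omega
    rcases (show (a:ℕ) = 0 ∨ (1 ≤ (a:ℕ) ∧ (a:ℕ) ≤ k-2) ∨ (a:ℕ) = k-1 by omega) with
      hA0 | ⟨hA1, hA1'⟩ | hA2
    · -- A0 : identity
      have haz : a = z0 := Fin.ext (by omega)
      have hfix : ∀ t : Fin (k+1), (t:ℕ) ≠ 0 → (t:ℕ) ≠ k → σ t = t := by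
        intro t h1t h2t
        obtain ⟨hlt, hd⟩ := starA t (by omega) (by omega)
        have := t.isLt
        exact Fin.ext (by omega)
      apply Equiv.ext
      intro t
      show σ t = t
      by_cases h1t : (t:ℕ) = 0
      · have he : t = a := Fin.ext (by omega)
        rw [he, ha0]
        exact haz.symm
      · by_cases h2t : (t:ℕ) = k
        · have he : t = L := Fin.ext (by omega)
          rw [he, hA]
        · exact hfix t h1t h2t
    · -- A1 : 1 ≤ a ≤ k-2, contradiction via pair (0,1)
      exfalso
      obtain ⟨a1, ha1⟩ : ∃ z : Fin (k+1), (z:ℕ) = (a:ℕ) + 1 := ⟨⟨(a:ℕ)+1, by omega⟩, rfl⟩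
      have hσa1 : σ a1 = z1 := by
        obtain ⟨hlt, hd⟩ := starA a1 (by omega) (by omega)
        exact Fin.ext (by omega)
      have hσ0 : (σ z0).val = k - (a:ℕ) := by
        obtain ⟨hlt, hd⟩ := starA z0 (by omega) (by omega)
        omega
      obtain ⟨p, q', hpq', hor2, hval2⟩ := KE z0 z1 h01
      rcases hor2 with ⟨h1', h2'⟩ | ⟨h1', h2'⟩
      swap
      · have e1 : p = a1 := inj (h1'.trans hσa1.symm)
        have e2 : q' = a := inj (h2'.trans ha0.symm)
        rw [e1, e2, Fin.lt_def, ha1] at hpq'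
        omega
      have e1 : p = a := inj (h1'.trans ha0.symm)
      have e2 : q' = a1 := inj (h2'.trans hσa1.symm)
      have hpv : (p:ℕ) = (a:ℕ) := by rw [e1]
      have hqv : (q':ℕ) = (a:ℕ)+1 := by rw [e2, ha1]
      have h := hval2 z0
      rw [dtuple_val', dtuple_val', hz0, hz1] at h
      have hb1 := (σ z0).isLt
      clear * - h hk hσ0 hpv hqv hA1 hA1' hav hb1 hz0 hz1 hz2 hL
      simp only [dnat] at h
      split_ifs at h <;> omega
    · -- A2 : a = k-1, contradiction via pair (0,2)
      exfalso
      have hσ0 : σ z0 = z1 := by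
        obtain ⟨hlt, hd⟩ := starA z0 (by omega) (by omega)
        exact Fin.ext (by omega)
      have hσ1 : σ z1 = z2 := by
        obtain ⟨hlt, hd⟩ := starA z1 (by omega) (by omega)
        exact Fin.ext (by omega)
      obtain ⟨p, q', hpq', hor2, hval2⟩ := KE z0 z2 h02
      rcases hor2 with ⟨h1', h2'⟩ | ⟨h1', h2'⟩
      · have e1 : p = a := inj (h1'.trans ha0.symm)
        have e2 : q' = z1 := inj (h2'.trans hσ1.symm)
        rw [e1, e2, Fin.lt_def, hz1] at hpq'
        omega
      have e1 : p = z1 := inj (h1'.trans hσ1.symm)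
      have e2 : q' = a := inj (h2'.trans ha0.symm)
      have hpv : (p:ℕ) = 1 := by rw [e1, hz1]
      have hqv : (q':ℕ) = k-1 := by rw [e2]; omega
      have hσ0v : (σ z0).val = 1 := by rw [hσ0, hz1]
      have h := hval2 z0
      rw [dtuple_val', dtuple_val', hz0, hz2] at h
      have hb1 := (σ z0).isLt
      clear * - h hk hσ0v hpv hqv hA2 hav hb1 hz0 hz1 hz2 hL
      simp only [dnat] at h
      split_ifs at h <;> omega
  · -- CASE B : σ L ≠ L
    exfalso
    have hne : (σ L).val ≠ k := fun hh => hA (Fin.ext (by rw [hh, hL]))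
    have hiv : (σ L).val < k := by have := (σ L).isLt; omega
    have hσLL : σ L < L := Fin.lt_def.mpr (by omega)
    obtain ⟨r, q, hrq, hor, hval⟩ := KE (σ L) L hσLL
    rcases hor with ⟨h1, h2⟩ | ⟨h1, h2⟩
    · have he : r = L := inj h1
      rw [he, Fin.lt_def, hL] at hrq
      have := q.isLt
      omega
    have hq : q = L := inj h2
    have hqk : (q:ℕ) = k := by rw [hq, hL]
    have hrv : (r:ℕ) < k := by have := Fin.lt_def.mp hrq; omega
    have hσr : (σ r).val = k := by have := congrArg Fin.val h1; omega
    have starB : ∀ t : Fin (k+1), (t:ℕ) ≠ (r:ℕ) → (t:ℕ) ≠ k →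
        (σ t).val < k ∧ ((σ t).val + (r:ℕ) = (t:ℕ) + (σ L).val ∨
          (σ t).val + (r:ℕ) = (t:ℕ) + (σ L).val + k ∨
          (σ t).val + (r:ℕ) + k = (t:ℕ) + (σ L).val) := by
      intro t ht1 ht2
      have h := hval t
      rw [dtuple_val', dtuple_val', hL, hqk] at h
      have hb1 := (σ t).isLt
      have hb2 := t.isLt
      clear * - h hk ht1 ht2 hb1 hb2 hrv hiv hz0 hz1 hz2 hL
      simp only [dnat] at h
      split_ifs at h <;> omega
    rcases (show (r:ℕ) = k-1 ∨ (k = 3 ∧ (r:ℕ) ≤ 1) ∨ (4 ≤ k ∧ (r:ℕ) ≤ k - 2) by omega) with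
      hrB | ⟨hk3, hrB⟩ | ⟨hk4, hrB⟩
    · -- B2 : r = k-1
      rcases (show (σ L).val = 0 ∨ (σ L).val = 1 ∨ (2 ≤ (σ L).val ∧ (σ L).val ≤ k-2) ∨
          (σ L).val = k-1 by omega) with hi | hi | ⟨hi1, hi2⟩ | hi
      · -- σL = 0 : use pair (0,2)
        have hσ1 : σ z1 = z2 := by
          obtain ⟨hlt, hd⟩ := starB z1 (by omega) (by omega)
          exact Fin.ext (by omega)
        have hσ0v : (σ z0).val = 1 := by
          obtain ⟨hlt, hd⟩ := starB z0 (by omega) (by omega)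
          omega
        have hσLz : σ L = z0 := Fin.ext (by omega)
        obtain ⟨p, q', hpq', hor2, hval2⟩ := KE z0 z2 h02
        rcases hor2 with ⟨h1', h2'⟩ | ⟨h1', h2'⟩
        · have e1 : p = L := inj (h1'.trans hσLz.symm)
          rw [e1, Fin.lt_def, hL] at hpq'
          have := q'.isLt
          omega
        have e1 : p = z1 := inj (h1'.trans hσ1.symm)
        have e2 : q' = L := inj (h2'.trans hσLz.symm)
        have hpv : (p:ℕ) = 1 := by rw [e1, hz1]
        have hqv : (q':ℕ) = k := by rw [e2, hL]
        have h := hval2 z0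
        rw [dtuple_val', dtuple_val', hz0, hz2] at h
        have hb1 := (σ z0).isLt
        clear * - h hk hσ0v hpv hqv hb1 hi hz0 hz1 hz2 hL
        simp only [dnat] at h
        split_ifs at h <;> omega
      · -- σL = 1 : use pair (0,1)
        obtain ⟨m2, hm2⟩ : ∃ z : Fin (k+1), (z:ℕ) = k-2 := ⟨⟨k-2, by omega⟩, rfl⟩
        have hσm2 : σ m2 = z0 := by
          obtain ⟨hlt, hd⟩ := starB m2 (by omega) (by omega)
          exact Fin.ext (by omega)
        have hσLz : σ L = z1 := Fin.ext (by omega)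
        obtain ⟨p, q', hpq', hor2, hval2⟩ := KE z0 z1 h01
        rcases hor2 with ⟨h1', h2'⟩ | ⟨h1', h2'⟩
        swap
        · have e1 : p = L := inj (h1'.trans hσLz.symm)
          rw [e1, Fin.lt_def, hL] at hpq'
          have := q'.isLt
          omega
        have e1 : p = m2 := inj (h1'.trans hσm2.symm)
        have e2 : q' = L := inj (h2'.trans hσLz.symm)
        have hpv : (p:ℕ) = k-2 := by rw [e1, hm2]
        have hqv : (q':ℕ) = k := by rw [e2, hL]
        have h := hval2 r
        rw [dtuple_val', dtuple_val', hz0, hz1] at h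
        clear * - h hk hσr hpv hqv hrB hrv hi hz0 hz1 hz2 hL
        simp only [dnat] at h
        split_ifs at h <;> omega
      · -- 2 ≤ σL ≤ k-2 : use pair (0,1)
        obtain ⟨w1, hw1⟩ : ∃ z : Fin (k+1), (z:ℕ) = k-1-(σ L).val :=
          ⟨⟨k-1-(σ L).val, by omega⟩, rfl⟩
        obtain ⟨w2, hw2⟩ : ∃ z : Fin (k+1), (z:ℕ) = k-(σ L).val :=
          ⟨⟨k-(σ L).val, by omega⟩, rfl⟩
        have hσw1 : σ w1 = z0 := by
          obtain ⟨hlt, hd⟩ := starB w1 (by omega) (by omega)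
          exact Fin.ext (by omega)
        have hσw2 : σ w2 = z1 := by
          obtain ⟨hlt, hd⟩ := starB w2 (by omega) (by omega)
          exact Fin.ext (by omega)
        have hσ0v : (σ z0).val = (σ L).val + 1 := by
          obtain ⟨hlt, hd⟩ := starB z0 (by omega) (by omega)
          omega
        obtain ⟨p, q', hpq', hor2, hval2⟩ := KE z0 z1 h01
        rcases hor2 with ⟨h1', h2'⟩ | ⟨h1', h2'⟩
        swap
        · have e1 : p = w2 := inj (h1'.trans hσw2.symm)
          have e2 : q' = w1 := inj (h2'.trans hσw1.symm)
          rw [e1, e2, Fin.lt_def, hw1, hw2] at hpq'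
          omega
        have e1 : p = w1 := inj (h1'.trans hσw1.symm)
        have e2 : q' = w2 := inj (h2'.trans hσw2.symm)
        have hpv : (p:ℕ) = k-1-(σ L).val := by rw [e1, hw1]
        have hqv : (q':ℕ) = k-(σ L).val := by rw [e2, hw2]
        have h := hval2 z0
        rw [dtuple_val', dtuple_val', hz0, hz1] at h
        have hb1 := (σ z0).isLt
        clear * - h hk hσ0v hpv hqv hi1 hi2 hiv hb1 hz0 hz1 hz2 hL
        simp only [dnat] at h
        split_ifs at h <;> omega
      · -- σL = k-1 : use pair (0,1)
        have hσ0 : σ z0 = z0 := by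
          obtain ⟨hlt, hd⟩ := starB z0 (by omega) (by omega)
          exact Fin.ext (by omega)
        have hσ1 : σ z1 = z1 := by
          obtain ⟨hlt, hd⟩ := starB z1 (by omega) (by omega)
          exact Fin.ext (by omega)
        obtain ⟨p, q', hpq', hor2, hval2⟩ := KE z0 z1 h01
        rcases hor2 with ⟨h1', h2'⟩ | ⟨h1', h2'⟩
        swap
        · have e1 : p = z1 := inj (h1'.trans hσ1.symm)
          have e2 : q' = z0 := inj (h2'.trans hσ0.symm)
          rw [e1, e2, Fin.lt_def, hz0, hz1] at hpq'
          omega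
        have e1 : p = z0 := inj (h1'.trans hσ0.symm)
        have e2 : q' = z1 := inj (h2'.trans hσ1.symm)
        have hpv : (p:ℕ) = 0 := by rw [e1, hz0]
        have hqv : (q':ℕ) = 1 := by rw [e2, hz1]
        have h := hval2 r
        rw [dtuple_val', dtuple_val', hz0, hz1] at h
        clear * - h hk hσr hpv hqv hrB hrv hi hz0 hz1 hz2 hL
        simp only [dnat] at h
        split_ifs at h <;> omega
    · -- B3 : k = 3
      subst hk3
      rcases (show (r:ℕ) = 0 ∨ (r:ℕ) = 1 by omega) with hr0 | hr0 <;>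
        rcases (show (σ L).val = 0 ∨ (σ L).val = 1 ∨ (σ L).val = 2 by omega) with hi | hi | hi
      · -- r=0, σL=0 : pair (1,2)
        have hσ1 : σ z1 = z1 := by
          obtain ⟨hlt, hd⟩ := starB z1 (by omega) (by omega)
          exact Fin.ext (by omega)
        have hσ2 : σ z2 = z2 := by
          obtain ⟨hlt, hd⟩ := starB z2 (by omega) (by omega)
          exact Fin.ext (by omega)
        obtain ⟨p, q', hpq', hor2, hval2⟩ := KE z1 z2 h12
        rcases hor2 with ⟨h1', h2'⟩ | ⟨h1', h2'⟩
        swap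
        · have e1 : p = z2 := inj (h1'.trans hσ2.symm)
          have e2 : q' = z1 := inj (h2'.trans hσ1.symm)
          rw [e1, e2, Fin.lt_def, hz1, hz2] at hpq'
          omega
        have e1 : p = z1 := inj (h1'.trans hσ1.symm)
        have e2 : q' = z2 := inj (h2'.trans hσ2.symm)
        have hpv : (p:ℕ) = 1 := by rw [e1, hz1]
        have hqv : (q':ℕ) = 2 := by rw [e2, hz2]
        have h := hval2 L
        rw [dtuple_val', dtuple_val', hz1, hz2, hL] at h
        clear * - h hk hi hpv hqv hz0 hz1 hz2 hL
        simp only [dnat] at h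
        split_ifs at h <;> omega
      · -- r=0, σL=1 : pair (0,1)
        have hrz : r = z0 := Fin.ext (by omega)
        have hσ0L : σ z0 = L := by rw [← hrz]; exact h1
        have hσ2 : σ z2 = z0 := by
          obtain ⟨hlt, hd⟩ := starB z2 (by omega) (by omega)
          exact Fin.ext (by omega)
        have hσLz : σ L = z1 := Fin.ext (by omega)
        obtain ⟨p, q', hpq', hor2, hval2⟩ := KE z0 z1 h01
        rcases hor2 with ⟨h1', h2'⟩ | ⟨h1', h2'⟩
        swap
        · have e1 : p = L := inj (h1'.trans hσLz.symm)
          rw [e1, Fin.lt_def, hL] at hpq'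
          have := q'.isLt
          omega
        have e1 : p = z2 := inj (h1'.trans hσ2.symm)
        have e2 : q' = L := inj (h2'.trans hσLz.symm)
        have hpv : (p:ℕ) = 2 := by rw [e1, hz2]
        have hqv : (q':ℕ) = 3 := by rw [e2, hL]
        have hσ0v : (σ z0).val = 3 := by rw [hσ0L, hL]
        have h := hval2 z0
        rw [dtuple_val', dtuple_val', hz0, hz1] at h
        clear * - h hk hσ0v hpv hqv hz0 hz1 hz2 hL
        simp only [dnat] at h
        split_ifs at h <;> omega
      · -- r=0, σL=2 : pair (1,L)
        have hrz : r = z0 := Fin.ext (by omega)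
        have hσ0L : σ z0 = L := by rw [← hrz]; exact h1
        have hσ2 : σ z2 = z1 := by
          obtain ⟨hlt, hd⟩ := starB z2 (by omega) (by omega)
          exact Fin.ext (by omega)
        have hσ1v : (σ z1).val = 0 := by
          obtain ⟨hlt, hd⟩ := starB z1 (by omega) (by omega)
          omega
        obtain ⟨p, q', hpq', hor2, hval2⟩ := KE z1 L h1L
        rcases hor2 with ⟨h1', h2'⟩ | ⟨h1', h2'⟩
        · have e1 : p = z2 := inj (h1'.trans hσ2.symm)
          have e2 : q' = z0 := inj (h2'.trans hσ0L.symm)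
          rw [e1, e2, Fin.lt_def, hz0, hz2] at hpq'
          omega
        have e1 : p = z0 := inj (h1'.trans hσ0L.symm)
        have e2 : q' = z2 := inj (h2'.trans hσ2.symm)
        have hpv : (p:ℕ) = 0 := by rw [e1, hz0]
        have hqv : (q':ℕ) = 2 := by rw [e2, hz2]
        have h := hval2 z1
        rw [dtuple_val', dtuple_val', hz1, hL] at h
        clear * - h hk hσ1v hpv hqv hz0 hz1 hz2 hL
        simp only [dnat] at h
        split_ifs at h <;> omega
      · -- r=1, σL=0 : pair (0,2)
        have hrz : r = z1 := Fin.ext (by omega)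
        have hσ1L : σ z1 = L := by rw [← hrz]; exact h1
        have hσ0 : σ z0 = z2 := by
          obtain ⟨hlt, hd⟩ := starB z0 (by omega) (by omega)
          exact Fin.ext (by omega)
        have hσLz : σ L = z0 := Fin.ext (by omega)
        obtain ⟨p, q', hpq', hor2, hval2⟩ := KE z0 z2 h02
        rcases hor2 with ⟨h1', h2'⟩ | ⟨h1', h2'⟩
        · have e1 : p = L := inj (h1'.trans hσLz.symm)
          rw [e1, Fin.lt_def, hL] at hpq'
          have := q'.isLt
          omega
        have e1 : p = z0 := inj (h1'.trans hσ0.symm)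
        have e2 : q' = L := inj (h2'.trans hσLz.symm)
        have hpv : (p:ℕ) = 0 := by rw [e1, hz0]
        have hqv : (q':ℕ) = 3 := by rw [e2, hL]
        have hσ1v : (σ z1).val = 3 := by rw [hσ1L, hL]
        have h := hval2 z1
        rw [dtuple_val', dtuple_val', hz0, hz2] at h
        clear * - h hk hσ1v hpv hqv hz0 hz1 hz2 hL
        simp only [dnat] at h
        split_ifs at h <;> omega
      · -- r=1, σL=1 : pair (0,1)
        have hrz : r = z1 := Fin.ext (by omega)
        have hσ1L : σ z1 = L := by rw [← hrz]; exact h1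
        have hσ0 : σ z0 = z0 := by
          obtain ⟨hlt, hd⟩ := starB z0 (by omega) (by omega)
          exact Fin.ext (by omega)
        have hσLz : σ L = z1 := Fin.ext (by omega)
        obtain ⟨p, q', hpq', hor2, hval2⟩ := KE z0 z1 h01
        rcases hor2 with ⟨h1', h2'⟩ | ⟨h1', h2'⟩
        swap
        · have e1 : p = L := inj (h1'.trans hσLz.symm)
          rw [e1, Fin.lt_def, hL] at hpq'
          have := q'.isLt
          omega
        have e1 : p = z0 := inj (h1'.trans hσ0.symm)
        have e2 : q' = L := inj (h2'.trans hσLz.symm)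
        have hpv : (p:ℕ) = 0 := by rw [e1, hz0]
        have hqv : (q':ℕ) = 3 := by rw [e2, hL]
        have hσ1v : (σ z1).val = 3 := by rw [hσ1L, hL]
        have h := hval2 z1
        rw [dtuple_val', dtuple_val', hz0, hz1] at h
        clear * - h hk hσ1v hpv hqv hz0 hz1 hz2 hL
        simp only [dnat] at h
        split_ifs at h <;> omega
      · -- r=1, σL=2 : pair (0,1)
        have hrz : r = z1 := Fin.ext (by omega)
        have hσ1L : σ z1 = L := by rw [← hrz]; exact h1
        have hσ2 : σ z2 = z0 := by
          obtain ⟨hlt, hd⟩ := starB z2 (by omega) (by omega)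
          exact Fin.ext (by omega)
        have hσ0 : σ z0 = z1 := by
          obtain ⟨hlt, hd⟩ := starB z0 (by omega) (by omega)
          exact Fin.ext (by omega)
        obtain ⟨p, q', hpq', hor2, hval2⟩ := KE z0 z1 h01
        rcases hor2 with ⟨h1', h2'⟩ | ⟨h1', h2'⟩
        · have e1 : p = z2 := inj (h1'.trans hσ2.symm)
          have e2 : q' = z0 := inj (h2'.trans hσ0.symm)
          rw [e1, e2, Fin.lt_def, hz0, hz2] at hpq'
          omega
        have e1 : p = z0 := inj (h1'.trans hσ0.symm)
        have e2 : q' = z2 := inj (h2'.trans hσ2.symm)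
        have hpv : (p:ℕ) = 0 := by rw [e1, hz0]
        have hqv : (q':ℕ) = 2 := by rw [e2, hz2]
        have hσ1v : (σ z1).val = 3 := by rw [hσ1L, hL]
        have h := hval2 z1
        rw [dtuple_val', dtuple_val', hz0, hz1] at h
        clear * - h hk hσ1v hpv hqv hz0 hz1 hz2 hL
        simp only [dnat] at h
        split_ifs at h <;> omega
    · -- B1 : k ≥ 4, r ≤ k-2
      rcases (show (r:ℕ) ≤ 1 ∨ 2 ≤ (r:ℕ) by omega) with hr1 | hr1
      · -- B1a : r ≤ 1, use pair (σ z2, L)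
        obtain ⟨hσ2lt, hσ2d⟩ := starB z2 (by omega) (by omega)
        have hσ2L : σ z2 < L := Fin.lt_def.mpr (by omega)
        obtain ⟨p, q', hpq', hor2, hval2⟩ := KE (σ z2) L hσ2L
        rcases hor2 with ⟨h1', h2'⟩ | ⟨h1', h2'⟩
        · have e1 : p = z2 := inj h1'
          have e2 : q' = r := inj (h2'.trans h1.symm)
          rw [e1, e2, Fin.lt_def, hz2] at hpq'
          omega
        have e1 : p = r := inj (h1'.trans h1.symm)
        have e2 : q' = z2 := inj h2'
        have hpv : (p:ℕ) = (r:ℕ) := by rw [e1]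
        have hqv : (q':ℕ) = 2 := by rw [e2, hz2]
        rcases (show (r:ℕ) = 0 ∨ (r:ℕ) = 1 by omega) with hr0 | hr0
        · obtain ⟨hxlt, hxd⟩ := starB z1 (by omega) (by omega)
          have h := hval2 z1
          rw [dtuple_val', dtuple_val', hL, hz1] at h
          clear * - h hk hk4 hσ2lt hσ2d hxlt hxd hpv hqv hr0 hiv hrv hz0 hz1 hz2 hL
          simp only [dnat] at h
          split_ifs at h <;> omega
        · obtain ⟨hxlt, hxd⟩ := starB z0 (by omega) (by omega)
          have h := hval2 z0
          rw [dtuple_val', dtuple_val', hL, hz0] at h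
          clear * - h hk hk4 hσ2lt hσ2d hxlt hxd hpv hqv hr0 hiv hrv hz0 hz1 hz2 hL
          simp only [dnat] at h
          split_ifs at h <;> omega
      · -- B1b : 2 ≤ r ≤ k-2, use pair (σ z0, L)
        obtain ⟨hσ0lt, hσ0d⟩ := starB z0 (by omega) (by omega)
        have hσ0L : σ z0 < L := Fin.lt_def.mpr (by omega)
        obtain ⟨p, q', hpq', hor2, hval2⟩ := KE (σ z0) L hσ0L
        rcases hor2 with ⟨h1', h2'⟩ | ⟨h1', h2'⟩
        swap
        · have e1 : p = r := inj (h1'.trans h1.symm)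
          have e2 : q' = z0 := inj h2'
          rw [e1, e2, Fin.lt_def, hz0] at hpq'
          omega
        have e1 : p = z0 := inj h1'
        have e2 : q' = r := inj (h2'.trans h1.symm)
        have hpv : (p:ℕ) = 0 := by rw [e1, hz0]
        have hqv : (q':ℕ) = (r:ℕ) := by rw [e2]
        obtain ⟨m1, hm1⟩ : ∃ z : Fin (k+1), (z:ℕ) = k-1 := ⟨⟨k-1, by omega⟩, rfl⟩
        obtain ⟨hxlt, hxd⟩ := starB m1 (by omega) (by omega)
        have h := hval2 m1
        rw [dtuple_val', dtuple_val', hL, hm1] at h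
        clear * - h hk hk4 hσ0lt hσ0d hxlt hxd hpv hqv hr1 hrB hiv hrv hz0 hz1 hz2 hL hm1
        simp only [dnat] at h
        split_ifs at h <;> omega
end
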